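/- For n = 6k+3 with k ≥ 1, the minimum size of a 2-locating-dominating set of the cycle C_n is ⌈n/3⌉ + 1 = 2k+2. Moreover, M_2^{LD}(C_6) = 3 = ⌈6/3⌉ + 1. -/

import Mathlib

/-- `Dr G r D x` = `N_r[x] ∩ D`. -/
def Dr {V : Type*} (G : SimpleGraph V) (r : ℕ) (D : Set V) (x : V) : Set V :=
  {y | y ∈ D ∧ G.dist x y ≤ r}

/-- `D` is an `r`-identifying code of `G`. -/
def IsIdCode {V : Type*} (G : SimpleGraph V) (r : ℕ) (D : Set V) : Prop :=
  (∀ x, (Dr G r D x).Nonempty) ∧ ∀ x y, x ≠ y → Dr G r D x ≠ Dr G r D y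

/-- `D` is an `r`-locating-dominating set of `G`. -/
def IsLD {V : Type*} (G : SimpleGraph V) (r : ℕ) (D : Set V) : Prop :=
  (∀ x ∉ D, (Dr G r D x).Nonempty) ∧
    ∀ x ∉ D, ∀ y ∉ D, x ≠ y → Dr G r D x ≠ Dr G r D y

/-- The cycle graph on `ZMod n`. -/
def cycleG (n : ℕ) : SimpleGraph (ZMod n) :=
  SimpleGraph.fromRel (fun x y => x - y = 1)

set_option linter.unusedVariables false
set_option linter.unusedSectionVars false
set_option maxHeartbeats 1000000

section A
variable {n : ℕ}

lemma zmod_nat_ne {a b : ℕ} (ha : a < n) (hb : b < n) (hab : a ≠ b) :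
    (a : ZMod n) ≠ (b : ZMod n) := by
  intro h
  apply hab
  have := congrArg ZMod.val h
  rwa [ZMod.val_cast_of_lt ha, ZMod.val_cast_of_lt hb] at this

lemma zmod_one_ne_zero (hn : 2 ≤ n) : (1 : ZMod n) ≠ 0 := by
  have := zmod_nat_ne (n := n) (a := 1) (b := 0) (by omega) (by omega) (by omega)
  simpa using this

lemma cycleG_adj_succ (hn : 2 ≤ n) (x : ZMod n) : (cycleG n).Adj x (x + 1) := by
  rw [cycleG, SimpleGraph.fromRel_adj]
  constructor
  · intro h
    exact zmod_one_ne_zero hn (by linear_combination h.symm)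
  · right; ring

lemma cycleG_adj_iff (hn : 2 ≤ n) {x y : ZMod n} :
    (cycleG n).Adj x y ↔ (y = x + 1 ∨ y = x - 1) := by
  rw [cycleG, SimpleGraph.fromRel_adj]
  constructor
  · rintro ⟨hne, h | h⟩
    · right; linear_combination -h
    · left; linear_combination h
  · rintro (h | h)
    · subst h
      refine ⟨fun h => zmod_one_ne_zero hn (by linear_combination -h), Or.inr (by ring)⟩
    · subst h
      refine ⟨fun h => zmod_one_ne_zero hn (by linear_combination h), Or.inl (by ring)⟩

lemma cycleG_reachable (hn : 2 ≤ n) (x y : ZMod n) : (cycleG n).Reachable x y := by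
  have key : ∀ m : ℕ, (cycleG n).Reachable x (x + (m : ZMod n)) := by
    intro m
    induction m with
    | zero => simpa using SimpleGraph.Reachable.refl x
    | succ m ih =>
        refine ih.trans ?_
        have := (cycleG_adj_succ hn (x + (m : ZMod n))).reachable
        simpa [add_assoc] using this
  haveI : NeZero n := ⟨by omega⟩
  have : y = x + ((y - x).val : ZMod n) := by
    rw [ZMod.natCast_val, ZMod.cast_id]; ring
  rw [this]
  exact key _

lemma walk_len_two {x y : ZMod n} (hn : 2 ≤ n) (p : (cycleG n).Walk x y)
    (hp : p.length ≤ 2) :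
    y = x ∨ y = x + 1 ∨ y = x - 1 ∨ y = x + 2 ∨ y = x - 2 := by
  match p with
  | SimpleGraph.Walk.nil => left; rfl
  | SimpleGraph.Walk.cons h SimpleGraph.Walk.nil =>
      rcases (cycleG_adj_iff hn).1 h with h1 | h1
      · right; left; exact h1.symm ▸ rfl
      · right; right; left; exact h1.symm ▸ rfl
  | SimpleGraph.Walk.cons (v := z) h (SimpleGraph.Walk.cons h2 SimpleGraph.Walk.nil) =>
      rcases (cycleG_adj_iff hn).1 h with h1 | h1 <;>
        rcases (cycleG_adj_iff hn).1 h2 with h3 | h3 <;> subst h1 <;> subst h3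
      · right; right; right; left; ring
      · left; ring
      · left; ring
      · right; right; right; right; ring
  | SimpleGraph.Walk.cons h (SimpleGraph.Walk.cons h2 (SimpleGraph.Walk.cons h3 q)) =>
      exfalso
      simp only [SimpleGraph.Walk.length_cons] at hp
      omega

lemma dist_le_two_iff (hn : 5 ≤ n) {x y : ZMod n} :
    (cycleG n).dist x y ≤ 2 ↔
      (y = x ∨ y = x + 1 ∨ y = x - 1 ∨ y = x + 2 ∨ y = x - 2) := by
  constructor
  · intro h
    obtain ⟨p, hp⟩ := (cycleG_reachable (by omega) x y).exists_walk_length_eq_dist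
    exact walk_len_two (by omega) p (hp ▸ h)
  · have two : (2 : ZMod n) = (1 : ZMod n) + 1 := by norm_num
    rintro (h | h | h | h | h) <;> subst h
    · simp [SimpleGraph.dist_self]
    · calc (cycleG n).dist x (x+1) ≤ ((cycleG_adj_succ (by omega) x).toWalk).length :=
          SimpleGraph.dist_le _
        _ ≤ 2 := by simp [SimpleGraph.Adj.toWalk]
    · have h := cycleG_adj_succ (by omega) (x - 1)
      rw [sub_add_cancel] at h
      calc (cycleG n).dist x (x-1) ≤ (h.symm.toWalk).length := SimpleGraph.dist_le _
        _ ≤ 2 := by simp [SimpleGraph.Adj.toWalk]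
    · have h1 := cycleG_adj_succ (by omega) x
      have h2 := cycleG_adj_succ (by omega) (x + 1)
      have e : x + 1 + 1 = x + 2 := by ring
      rw [e] at h2
      calc (cycleG n).dist x (x+2) ≤ (SimpleGraph.Walk.cons h1 h2.toWalk).length :=
            SimpleGraph.dist_le _
        _ ≤ 2 := by simp [SimpleGraph.Adj.toWalk]
    · have h1 := cycleG_adj_succ (by omega) (x - 2)
      have h2 := cycleG_adj_succ (by omega) (x - 2 + 1)
      have e : x - 2 + 1 + 1 = x := by ring
      rw [e] at h2
      calc (cycleG n).dist x (x-2) ≤ (SimpleGraph.Walk.cons h2.symm h1.symm.toWalk).length :=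
            SimpleGraph.dist_le _
        _ ≤ 2 := by simp [SimpleGraph.Adj.toWalk]
end A

section B
variable {n : ℕ} {D : Set (ZMod n)} {c : ZMod n}

noncomputable def sg (D : Set (ZMod n)) (c : ZMod n) : ℕ :=
  sInf {t : ℕ | 0 < t ∧ c + (t : ZMod n) ∈ D}

noncomputable def nextc (D : Set (ZMod n)) (c : ZMod n) : ZMod n :=
  c + (sg D c : ZMod n)

lemma sg_spec (hn : 0 < n) (hc : c ∈ D) :
    0 < sg D c ∧ c + (sg D c : ZMod n) ∈ D :=
  Nat.sInf_mem (s := {t : ℕ | 0 < t ∧ c + (t : ZMod n) ∈ D})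
    ⟨n, hn, by simpa [ZMod.natCast_self] using hc⟩

lemma sg_pos (hn : 0 < n) (hc : c ∈ D) : 0 < sg D c := (sg_spec hn hc).1

lemma nextc_mem (hn : 0 < n) (hc : c ∈ D) : nextc D c ∈ D := (sg_spec hn hc).2

lemma sg_le {t : ℕ} (ht : 0 < t) (htD : c + (t : ZMod n) ∈ D) : sg D c ≤ t :=
  Nat.sInf_le ⟨ht, htD⟩

lemma sg_not_mem {t : ℕ} (h1 : 0 < t) (h2 : t < sg D c) : c + (t : ZMod n) ∉ D :=
  fun hm => absurd (sg_le h1 hm) (by omega)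

lemma sg_le_n (hn : 0 < n) (hc : c ∈ D) : sg D c ≤ n :=
  sg_le hn (by simpa [ZMod.natCast_self] using hc)

lemma sg_eq_one_iff (hn : 0 < n) (hc : c ∈ D) : sg D c = 1 ↔ c + 1 ∈ D := by
  constructor
  · intro h
    have := (sg_spec hn hc).2
    rw [h] at this; simpa using this
  · intro h
    have h1 : sg D c ≤ 1 := sg_le one_pos (by simpa using h)
    have := sg_pos hn hc; omega

lemma next_inj (hn : 0 < n) {a b : ZMod n} (ha : a ∈ D) (hb : b ∈ D)
    (h : nextc D a = nextc D b) : a = b := by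
  rcases le_total (sg D a) (sg D b) with hle | hle
  · rcases eq_or_lt_of_le hle with heq | hlt
    · unfold nextc at h; rw [heq] at h; exact add_right_cancel h
    · exfalso
      have he : a = b + ((sg D b - sg D a : ℕ) : ZMod n) := by
        rw [Nat.cast_sub hle]; unfold nextc at h; linear_combination h
      have hpa := sg_pos hn ha
      exact sg_not_mem (c := b) (t := sg D b - sg D a) (by omega) (by omega) (he ▸ ha)
  · rcases eq_or_lt_of_le hle with heq | hlt
    · unfold nextc at h; rw [heq] at h; exact add_right_cancel h
    · exfalso
      have he : b = a + ((sg D a - sg D b : ℕ) : ZMod n) := by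
        rw [Nat.cast_sub hle]; unfold nextc at h; linear_combination -h
      have hpb := sg_pos hn hb
      exact sg_not_mem (c := a) (t := sg D a - sg D b) (by omega) (by omega) (he ▸ hb)

lemma iter_mem (hn : 0 < n) {a : ZMod n} (ha : a ∈ D) (m : ℕ) :
    (nextc D)^[m] a ∈ D := by
  induction m with
  | zero => simpa using ha
  | succ m ih => rw [Function.iterate_succ_apply']; exact nextc_mem hn ih

lemma iter_inj (hn : 0 < n) (m : ℕ) {x y : ZMod n} (hx : x ∈ D) (hy : y ∈ D)
    (h : (nextc D)^[m] x = (nextc D)^[m] y) : x = y := by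
  induction m generalizing x y with
  | zero => simpa using h
  | succ m ih =>
      rw [Function.iterate_succ_apply, Function.iterate_succ_apply] at h
      exact next_inj hn hx hy (ih (nextc_mem hn hx) (nextc_mem hn hy) h)

lemma orbit_reach (hn : 0 < n) {a c' : ZMod n} (ha : a ∈ D) (hc' : c' ∈ D) :
    ∃ m, (nextc D)^[m] a = c' := by
  haveI : NeZero n := ⟨by omega⟩
  suffices H : ∀ t : ℕ, ∀ a : ZMod n, a ∈ D → (c' - a).val = t → ∃ m, (nextc D)^[m] a = c' by
    exact H _ a ha rfl
  intro t
  induction t using Nat.strong_induction_on with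
  | _ t ih =>
    intro a ha hval
    rcases Nat.eq_zero_or_pos t with rfl | htpos
    · have : c' - a = 0 := by
        have := ZMod.val_eq_zero (c' - a)
        exact this.1 hval
      exact ⟨0, by simp; linear_combination -this⟩
    · have hcast : a + (t : ZMod n) = c' := by
        rw [← hval, ZMod.natCast_val, ZMod.cast_id]; ring
      have hsle : sg D a ≤ t := sg_le htpos (hcast ▸ hc')
      rcases eq_or_lt_of_le hsle with heq | hlt
      · exact ⟨1, by simp [nextc, heq, hcast]⟩
      · have hb : nextc D a ∈ D := nextc_mem hn ha
        have hval2 : (c' - nextc D a).val = t - sg D a := by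
          have he : c' - nextc D a = ((t - sg D a : ℕ) : ZMod n) := by
            push_cast [Nat.cast_sub hsle]
            rw [← hcast]; unfold nextc; ring
          rw [he, ZMod.val_cast_of_lt]
          have : t < n := hval ▸ ZMod.val_lt (c' - a)
          omega
        obtain ⟨m, hm⟩ := ih (t - sg D a) (by have := sg_pos hn ha; omega) _ hb hval2
        exact ⟨m + 1, by rwa [Function.iterate_succ_apply]⟩

end B

open Finset

section B1
variable {n : ℕ} {D : Set (ZMod n)} {c : ZMod n} [NeZero n]

noncomputable def Dfin (D : Set (ZMod n)) : Finset (ZMod n) := D.toFinite.toFinset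

lemma mem_Dfin : c ∈ Dfin D ↔ c ∈ D := Set.Finite.mem_toFinset _

lemma iter_card {a : ZMod n} (ha : a ∈ D) : (nextc D)^[(Dfin D).card] a = a := by
  have hn : 0 < n := Nat.pos_of_ne_zero (NeZero.ne n)
  set d := (Dfin D).card with hd
  set f := nextc D with hf
  have hmaps : ∀ i ∈ range (d + 1), f^[i] a ∈ Dfin D := by
    intro i _; exact mem_Dfin.2 (iter_mem hn ha i)
  obtain ⟨i, hi, j, hj, hij, heq⟩ :=
    Finset.exists_ne_map_eq_of_card_lt_of_maps_to (by simp [hd]) hmaps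
  simp only [mem_range] at hi hj
  -- get period p
  have key : ∀ i j : ℕ, i < j → j ≤ d → f^[i] a = f^[j] a → f^[d] a = a := by
    intro i j hlt hjd heq
    set p := j - i with hp
    have hpp : 0 < p := by omega
    have hper : f^[p] a = a := by
      have h1 : f^[i] (f^[p] a) = f^[i] a := by
        rw [← Function.iterate_add_apply]
        rw [show i + p = j by omega]
        exact heq.symm
      exact iter_inj hn i (iter_mem hn ha p) ha h1
    have hmul : ∀ q, f^[p * q] a = a := by
      intro q
      induction q with
      | zero => simp
      | succ q ih =>
          rw [show p * (q + 1) = p * q + p by ring, Function.iterate_add_apply, hper, ih]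
    have hred : ∀ m, f^[m] a = f^[m % p] a := by
      intro m
      conv_lhs => rw [← Nat.mod_add_div m p]
      rw [Function.iterate_add_apply, hmul]
    have hsub : Dfin D ⊆ (range p).image (fun i => f^[i] a) := by
      intro c' hc'
      obtain ⟨m, hm⟩ := orbit_reach hn ha (mem_Dfin.1 hc')
      exact mem_image.2 ⟨m % p, mem_range.2 (Nat.mod_lt _ hpp), by rw [← hred, hm]⟩
    have hcard : d ≤ p := le_trans (card_le_card hsub) (le_trans card_image_le (by simp))
    have : p = d := by omega
    rw [← this]; exact hper
  rcases lt_or_gt_of_ne hij with hlt | hlt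
  · exact key i j hlt (by omega) heq
  · exact key j i hlt (by omega) heq.symm

lemma sum_sg (hne : D.Nonempty) : ∑ c ∈ Dfin D, sg D c = n := by
  have hn : 0 < n := Nat.pos_of_ne_zero (NeZero.ne n)
  set I : ZMod n → Finset (ZMod n) :=
    fun c => (range (sg D c)).image (fun j : ℕ => c + (j : ZMod n)) with hI
  have hcardI : ∀ c ∈ Dfin D, (I c).card = sg D c := by
    intro c hc
    rw [hI, card_image_of_injOn, card_range]
    intro j hj j' hj' hjj
    simp only [mem_coe, mem_range] at hj hj'
    have hsle := sg_le_n hn (mem_Dfin.1 hc)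
    have e : (j : ZMod n) = (j' : ZMod n) := by
      have := add_left_cancel hjj
      exact this
    have := congrArg ZMod.val e
    rwa [ZMod.val_cast_of_lt (by omega), ZMod.val_cast_of_lt (by omega)] at this
  have hdisj : (Dfin D : Set (ZMod n)).PairwiseDisjoint I := by
    intro c hc c' hc' hne'
    simp only [mem_coe] at hc hc'
    dsimp [Function.onFun]
    rw [Finset.disjoint_left]
    intro v hv hv'
    simp only [hI, mem_image, mem_range] at hv hv'
    obtain ⟨j, hj, rfl⟩ := hv
    obtain ⟨j', hj', he⟩ := hv'
    have hcD := mem_Dfin.1 hc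
    have hcD' := mem_Dfin.1 hc'
    rcases lt_trichotomy j' j with hlt | hEq | hlt
    · have he2 : c' = c + ((j - j' : ℕ) : ZMod n) := by
        rw [Nat.cast_sub (by omega)]
        linear_combination he
      exact sg_not_mem (c := c) (t := j - j') (by omega) (by omega) (he2 ▸ hcD')
    · apply hne'
      subst hEq
      have := add_right_cancel he
      exact this.symm
    · have he2 : c = c' + ((j' - j : ℕ) : ZMod n) := by
        rw [Nat.cast_sub (by omega)]
        linear_combination -he
      exact sg_not_mem (c := c') (t := j' - j) (by omega) (by omega) (he2 ▸ hcD)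
  have hcover : Finset.univ = (Dfin D).biUnion I := by
    apply Finset.ext
    intro v
    simp only [mem_univ, true_iff, mem_biUnion]
    obtain ⟨a, haD⟩ := hne
    have hex : ∃ t : ℕ, v - (t : ZMod n) ∈ D :=
      ⟨(v - a).val, by rw [ZMod.natCast_val, ZMod.cast_id]; simpa using haD⟩
    set r := sInf {t : ℕ | v - (t : ZMod n) ∈ D} with hr
    have hrmem : v - (r : ZMod n) ∈ D := Nat.sInf_mem hex
    set c := v - (r : ZMod n) with hc
    have hrlt : r < sg D c := by
      by_contra hge
      push_neg at hge
      have hsgpos := sg_pos hn hrmem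
      have hmem2 : v - ((r - sg D c : ℕ) : ZMod n) ∈ D := by
        have : v - ((r - sg D c : ℕ) : ZMod n) = c + (sg D c : ZMod n) := by
          rw [Nat.cast_sub hge, hc]; ring
        rw [this]
        exact nextc_mem hn hrmem
      have := Nat.sInf_le (s := {t : ℕ | v - (t : ZMod n) ∈ D}) hmem2
      omega
    refine ⟨c, mem_Dfin.2 hrmem, ?_⟩
    simp only [hI, mem_image, mem_range]
    exact ⟨r, hrlt, by rw [hc]; ring⟩
  have := Finset.card_biUnion (fun c hc c' hc' h => hdisj (mem_coe.2 hc) (mem_coe.2 hc') h)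
    (s := Dfin D) (t := I)
  have hn2 : (Finset.univ : Finset (ZMod n)).card = n := by
    simp [ZMod.card]
  rw [hcover, this] at hn2
  have h3 : ∑ c ∈ Dfin D, sg D c = ∑ u ∈ Dfin D, (I u).card :=
    (Finset.sum_congr rfl hcardI).symm
  rw [h3, hn2]
end B1

section rules
variable {n : ℕ} {D : Set (ZMod n)} {c : ZMod n}

lemma mem_shift {x y : ZMod n} (h : x = y) (hx : x ∈ D) : y ∈ D := h ▸ hx

lemma mem_Dr_iff (hn5 : 5 ≤ n) {x y : ZMod n} :
    y ∈ Dr (cycleG n) 2 D x ↔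
      y ∈ D ∧ (y = x ∨ y = x + 1 ∨ y = x - 1 ∨ y = x + 2 ∨ y = x - 2) :=
  and_congr_right fun _ => dist_le_two_iff hn5

lemma zmod_off_ne (hn : 9 ≤ n) (c : ZMod n) {a b : ℤ} (h1 : a ≠ b)
    (h2 : |a - b| < 9) : c + (a : ZMod n) ≠ c + (b : ZMod n) := by
  intro h
  have h3 : ((a - b : ℤ) : ZMod n) = 0 := by push_cast; linear_combination h
  rw [ZMod.intCast_zmod_eq_zero_iff_dvd] at h3
  have h5 : (n : ℤ) ≤ |a - b| :=
    Int.le_of_dvd (abs_pos.2 (sub_ne_zero.2 h1)) ((dvd_abs _ _).2 h3)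
  have : (9 : ℤ) ≤ (n : ℤ) := by exact_mod_cast hn
  omega

lemma ld_nonempty (hn : 9 ≤ n) (hLD : IsLD (cycleG n) 2 D) : D.Nonempty := by
  rcases Set.eq_empty_or_nonempty D with rfl | h
  · obtain ⟨y, hy⟩ := hLD.1 0 (by simp)
    exact absurd hy.1 (by simp)
  · exact h

lemma sg_le_five (hn : 9 ≤ n) (hLD : IsLD (cycleG n) 2 D) (hc : c ∈ D) :
    sg D c ≤ 5 := by
  by_contra hbig
  push_neg at hbig
  have hn5 : 5 ≤ n := by omega
  have t1 : c + 1 ∉ D := by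
    have := sg_not_mem (D := D) (c := c) (t := 1) (by norm_num) (by omega); push_cast at this
    exact this
  have t2 : c + 2 ∉ D := by
    have := sg_not_mem (D := D) (c := c) (t := 2) (by norm_num) (by omega); push_cast at this
    exact this
  have t3 : c + 3 ∉ D := by
    have := sg_not_mem (D := D) (c := c) (t := 3) (by norm_num) (by omega); push_cast at this
    exact this
  have t4 : c + 4 ∉ D := by
    have := sg_not_mem (D := D) (c := c) (t := 4) (by norm_num) (by omega); push_cast at this
    exact this
  have t5 : c + 5 ∉ D := by
    have := sg_not_mem (D := D) (c := c) (t := 5) (by norm_num) (by omega); push_cast at this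
    exact this
  obtain ⟨y, hy⟩ := hLD.1 (c + 3) t3
  rw [mem_Dr_iff hn5] at hy
  obtain ⟨hyD, hball⟩ := hy
  rcases hball with rfl | rfl | rfl | rfl | rfl
  · exact t3 hyD
  · exact t4 (mem_shift (by ring) hyD)
  · exact t2 (mem_shift (by ring) hyD)
  · exact t5 (mem_shift (by ring) hyD)
  · exact t1 (mem_shift (by ring) hyD)

lemma sg_five_left (hn : 9 ≤ n) (hLD : IsLD (cycleG n) 2 D) (hc : c ∈ D)
    (h5 : sg D c = 5) : c - 1 ∈ D := by
  by_contra hm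
  have hn5 : 5 ≤ n := by omega
  have t1 : c + 1 ∉ D := by
    have := sg_not_mem (D := D) (c := c) (t := 1) (by norm_num) (by omega); push_cast at this
    exact this
  have t2 : c + 2 ∉ D := by
    have := sg_not_mem (D := D) (c := c) (t := 2) (by norm_num) (by omega); push_cast at this
    exact this
  have t3 : c + 3 ∉ D := by
    have := sg_not_mem (D := D) (c := c) (t := 3) (by norm_num) (by omega); push_cast at this
    exact this
  have t4 : c + 4 ∉ D := by
    have := sg_not_mem (D := D) (c := c) (t := 4) (by norm_num) (by omega); push_cast at this
    exact this
  have hne : (c + 1 : ZMod n) ≠ c + 2 := by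
    have := zmod_off_ne hn c (a := 1) (b := 2) (by norm_num) (by norm_num)
    push_cast at this; exact this
  apply hLD.2 (c + 1) t1 (c + 2) t2 hne
  apply Set.ext; intro y
  rw [mem_Dr_iff hn5, mem_Dr_iff hn5]
  constructor
  · rintro ⟨hyD, (rfl | rfl | rfl | rfl | rfl)⟩
    · exact absurd hyD t1
    · exact absurd (mem_shift (by ring) hyD) t2
    · refine ⟨hyD, Or.inr (Or.inr (Or.inr (Or.inr (by ring))))⟩
    · exact absurd (mem_shift (by ring) hyD) t3
    · exact absurd (mem_shift (by ring) hyD) hm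
  · rintro ⟨hyD, (rfl | rfl | rfl | rfl | rfl)⟩
    · exact absurd hyD t2
    · exact absurd (mem_shift (by ring) hyD) t3
    · exact absurd (mem_shift (by ring) hyD) t1
    · exact absurd (mem_shift (by ring) hyD) t4
    · refine ⟨hyD, Or.inr (Or.inr (Or.inl (by ring)))⟩

lemma sg_five_right (hn : 9 ≤ n) (hLD : IsLD (cycleG n) 2 D) (hc : c ∈ D)
    (h5 : sg D c = 5) : c + 6 ∈ D := by
  by_contra hm
  have hn5 : 5 ≤ n := by omega
  have hn0 : 0 < n := by omega
  have t1 : c + 1 ∉ D := by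
    have := sg_not_mem (D := D) (c := c) (t := 1) (by norm_num) (by omega); push_cast at this
    exact this
  have t2 : c + 2 ∉ D := by
    have := sg_not_mem (D := D) (c := c) (t := 2) (by norm_num) (by omega); push_cast at this
    exact this
  have t3 : c + 3 ∉ D := by
    have := sg_not_mem (D := D) (c := c) (t := 3) (by norm_num) (by omega); push_cast at this
    exact this
  have t4 : c + 4 ∉ D := by
    have := sg_not_mem (D := D) (c := c) (t := 4) (by norm_num) (by omega); push_cast at this
    exact this
  have m5 : c + 5 ∈ D := by
    have := nextc_mem hn0 hc
    unfold nextc at this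
    rw [h5] at this
    push_cast at this
    exact this
  have hne : (c + 3 : ZMod n) ≠ c + 4 := by
    have := zmod_off_ne hn c (a := 3) (b := 4) (by norm_num) (by norm_num)
    push_cast at this; exact this
  apply hLD.2 (c + 3) t3 (c + 4) t4 hne
  apply Set.ext; intro y
  rw [mem_Dr_iff hn5, mem_Dr_iff hn5]
  constructor
  · rintro ⟨hyD, (rfl | rfl | rfl | rfl | rfl)⟩
    · exact absurd hyD t3
    · exact absurd (mem_shift (by ring) hyD) t4
    · exact absurd (mem_shift (by ring) hyD) t2
    · refine ⟨hyD, Or.inr (Or.inl (by ring))⟩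
    · exact absurd (mem_shift (by ring) hyD) t1
  · rintro ⟨hyD, (rfl | rfl | rfl | rfl | rfl)⟩
    · exact absurd hyD t4
    · refine ⟨hyD, Or.inr (Or.inr (Or.inr (Or.inl (by ring))))⟩
    · exact absurd (mem_shift (by ring) hyD) t3
    · exact absurd (mem_shift (by ring) hyD) hm
    · exact absurd (mem_shift (by ring) hyD) t2

lemma no_two_big (hn : 9 ≤ n) (hLD : IsLD (cycleG n) 2 D) (hc : c ∈ D)
    (h4 : 4 ≤ sg D c) (h4' : 4 ≤ sg D (nextc D c)) : False := by
  have hn5 : 5 ≤ n := by omega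
  have hn0 : 0 < n := by omega
  set c' := nextc D c with hc'
  set s := sg D c with hs
  have hc'eq : c' = c + (s : ZMod n) := rfl
  have hA : c' - 1 ∉ D := fun hh =>
    sg_not_mem (D := D) (c := c) (t := s - 1) (by omega) (by omega)
      (mem_shift (show c' - 1 = c + ((s - 1 : ℕ) : ZMod n) by
        rw [Nat.cast_sub (by omega), hc'eq]; push_cast; ring) hh)
  have hB : c' - 2 ∉ D := fun hh =>
    sg_not_mem (D := D) (c := c) (t := s - 2) (by omega) (by omega)
      (mem_shift (show c' - 2 = c + ((s - 2 : ℕ) : ZMod n) by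
        rw [Nat.cast_sub (by omega), hc'eq]; push_cast; ring) hh)
  have hC : c' - 3 ∉ D := fun hh =>
    sg_not_mem (D := D) (c := c) (t := s - 3) (by omega) (by omega)
      (mem_shift (show c' - 3 = c + ((s - 3 : ℕ) : ZMod n) by
        rw [Nat.cast_sub (by omega), hc'eq]; push_cast; ring) hh)
  have u1 : c' + 1 ∉ D := by
    have := sg_not_mem (D := D) (c := c') (t := 1) (by norm_num) (by omega); push_cast at this
    exact this
  have u2 : c' + 2 ∉ D := by
    have := sg_not_mem (D := D) (c := c') (t := 2) (by norm_num) (by omega); push_cast at this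
    exact this
  have u3 : c' + 3 ∉ D := by
    have := sg_not_mem (D := D) (c := c') (t := 3) (by norm_num) (by omega); push_cast at this
    exact this
  have hc'D : c' ∈ D := nextc_mem hn0 hc
  have hne : (c' - 1 : ZMod n) ≠ c' + 1 := by
    have := zmod_off_ne hn c' (a := -1) (b := 1) (by norm_num) (by norm_num)
    push_cast at this
    intro hh; apply this; rw [← hh]; ring
  apply hLD.2 (c' - 1) hA (c' + 1) u1 hne
  apply Set.ext; intro y
  rw [mem_Dr_iff hn5, mem_Dr_iff hn5]
  constructor
  · rintro ⟨hyD, (rfl | rfl | rfl | rfl | rfl)⟩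
    · exact absurd hyD hA
    · refine ⟨mem_shift (by ring) hyD, Or.inr (Or.inr (Or.inl (by ring)))⟩
    · exact absurd (mem_shift (by ring) hyD) hB
    · exact absurd (mem_shift (by ring) hyD) u1
    · exact absurd (mem_shift (by ring) hyD) hC
  · rintro ⟨hyD, (rfl | rfl | rfl | rfl | rfl)⟩
    · exact absurd hyD u1
    · exact absurd (mem_shift (by ring) hyD) u2
    · refine ⟨mem_shift (by ring) hyD, Or.inr (Or.inl (by ring))⟩
    · exact absurd (mem_shift (by ring) hyD) u3
    · exact absurd (mem_shift (by ring) hyD) hA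

lemma sg_three (hn : 9 ≤ n) (hLD : IsLD (cycleG n) 2 D) (hc : c ∈ D)
    (h3 : sg D c = 3) : c - 1 ∈ D ∨ c + 4 ∈ D := by
  by_contra hm
  push_neg at hm
  obtain ⟨hm1, hm4⟩ := hm
  have hn5 : 5 ≤ n := by omega
  have hn0 : 0 < n := by omega
  have t1 : c + 1 ∉ D := by
    have := sg_not_mem (D := D) (c := c) (t := 1) (by norm_num) (by omega); push_cast at this
    exact this
  have t2 : c + 2 ∉ D := by
    have := sg_not_mem (D := D) (c := c) (t := 2) (by norm_num) (by omega); push_cast at this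
    exact this
  have m3 : c + 3 ∈ D := by
    have := nextc_mem hn0 hc
    unfold nextc at this
    rw [h3] at this
    push_cast at this
    exact this
  have hne : (c + 1 : ZMod n) ≠ c + 2 := by
    have := zmod_off_ne hn c (a := 1) (b := 2) (by norm_num) (by norm_num)
    push_cast at this; exact this
  apply hLD.2 (c + 1) t1 (c + 2) t2 hne
  apply Set.ext; intro y
  rw [mem_Dr_iff hn5, mem_Dr_iff hn5]
  constructor
  · rintro ⟨hyD, (rfl | rfl | rfl | rfl | rfl)⟩
    · exact absurd hyD t1
    · exact absurd (mem_shift (by ring) hyD) t2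
    · refine ⟨hyD, Or.inr (Or.inr (Or.inr (Or.inr (by ring))))⟩
    · refine ⟨hyD, Or.inr (Or.inl (by ring))⟩
    · exact absurd (mem_shift (by ring) hyD) hm1
  · rintro ⟨hyD, (rfl | rfl | rfl | rfl | rfl)⟩
    · exact absurd hyD t2
    · refine ⟨hyD, Or.inr (Or.inr (Or.inr (Or.inl (by ring))))⟩
    · exact absurd (mem_shift (by ring) hyD) t1
    · exact absurd (mem_shift (by ring) hyD) hm4
    · refine ⟨hyD, Or.inr (Or.inr (Or.inl (by ring)))⟩
end rules

section C
variable {n : ℕ} [NeZero n] {D : Set (ZMod n)} {c z : ZMod n}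

noncomputable def Bset (D : Set (ZMod n)) : Finset (ZMod n) :=
  (Dfin D).filter fun c => 4 ≤ sg D c
noncomputable def Tset (D : Set (ZMod n)) : Finset (ZMod n) :=
  (Bset D).filter fun c => sg D (nextc D c) = 3
noncomputable def P2set (D : Set (ZMod n)) : Finset (ZMod n) :=
  (Bset D).image (nextc D)
noncomputable def P3set (D : Set (ZMod n)) : Finset (ZMod n) :=
  (Tset D).image fun c => nextc D (nextc D c)
noncomputable def Rset (D : Set (ZMod n)) : Finset (ZMod n) :=
  Dfin D \ (Bset D ∪ P2set D ∪ P3set D)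

lemma hn0' : 0 < n := Nat.pos_of_ne_zero (NeZero.ne n)

lemma nextc_eq (D : Set (ZMod n)) (x : ZMod n) :
    nextc D x = x + (sg D x : ZMod n) := rfl

lemma mem_B : c ∈ Bset D ↔ c ∈ D ∧ 4 ≤ sg D c := by
  rw [Bset, mem_filter, mem_Dfin]

lemma mem_T : c ∈ Tset D ↔ (c ∈ D ∧ 4 ≤ sg D c) ∧ sg D (nextc D c) = 3 := by
  rw [Tset, mem_filter, mem_B]

lemma pb2 (hn : 9 ≤ n) (hLD : IsLD (cycleG n) 2 D) (hc : c ∈ D)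
    (h4 : 4 ≤ sg D c) (h3 : sg D (nextc D c) = 3) :
    sg D c = 4 ∧ sg D (nextc D (nextc D c)) = 1 := by
  have hn0 : 0 < n := by omega
  have h5 := sg_le_five hn hLD hc
  have hc4 : sg D c = 4 := by
    rcases Nat.lt_or_ge (sg D c) 5 with h | h
    · omega
    · exfalso
      have h5' : sg D c = 5 := by omega
      have h6 := sg_five_right hn hLD hc h5'
      have : sg D (nextc D c) ≤ 1 := by
        apply sg_le one_pos
        apply (show c + 6 = nextc D c + ((1:ℕ) : ZMod n) by
          rw [nextc_eq, h5']; push_cast; ring) ▸ h6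
      omega
  have hnc : nextc D c ∈ D := nextc_mem hn0 hc
  rcases sg_three hn hLD hnc h3 with hl | hr
  · exfalso
    have heq2 : nextc D c - 1 = c + ((3 : ℕ) : ZMod n) := by
      rw [nextc_eq, hc4]; push_cast; ring
    exact sg_not_mem (D := D) (c := c) (t := 3) (by norm_num) (by omega) (heq2 ▸ hl)
  · have hle : sg D (nextc D (nextc D c)) ≤ 1 := by
      apply sg_le one_pos
      apply (show nextc D c + 4 = nextc D (nextc D c) + ((1:ℕ) : ZMod n) by
        rw [nextc_eq D (nextc D c), h3]; push_cast; ring) ▸ hr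
    have := sg_pos hn0 (nextc_mem hn0 hnc)
    exact ⟨hc4, by omega⟩

lemma pb1 (hn : 9 ≤ n) (hLD : IsLD (cycleG n) 2 D) (hc : c ∈ D)
    (h4 : 4 ≤ sg D c) (hne3 : sg D (nextc D c) ≠ 3) :
    sg D c + sg D (nextc D c) ≤ 6 := by
  have hn0 : 0 < n := by omega
  have h5 := sg_le_five hn hLD hc
  have hnb : ¬ 4 ≤ sg D (nextc D c) := fun hh => no_two_big hn hLD hc h4 hh
  rcases Nat.lt_or_ge (sg D c) 5 with h | h
  · omega
  · have h5' : sg D c = 5 := by omega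
    have h6 := sg_five_right hn hLD hc h5'
    have : sg D (nextc D c) ≤ 1 := by
      apply sg_le one_pos
      apply (show c + 6 = nextc D c + ((1:ℕ) : ZMod n) by
        rw [nextc_eq, h5']; push_cast; ring) ▸ h6
    omega

lemma disjBP2 (hn : 9 ≤ n) (hLD : IsLD (cycleG n) 2 D) :
    Disjoint (Bset D) (P2set D) := by
  rw [Finset.disjoint_left]
  intro z hz hz2
  obtain ⟨b, hb, rfl⟩ := mem_image.1 hz2
  exact no_two_big hn hLD (mem_B.1 hb).1 (mem_B.1 hb).2 (mem_B.1 hz).2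

lemma disjBP3 (hn : 9 ≤ n) (hLD : IsLD (cycleG n) 2 D) :
    Disjoint (Bset D) (P3set D) := by
  rw [Finset.disjoint_left]
  intro z hz hz3
  obtain ⟨t, ht, rfl⟩ := mem_image.1 hz3
  obtain ⟨⟨htD, ht4⟩, ht3⟩ := mem_T.1 ht
  have := (pb2 hn hLD htD ht4 ht3).2
  have h4 := (mem_B.1 hz).2
  omega

lemma disjP2P3 (hn : 9 ≤ n) (hLD : IsLD (cycleG n) 2 D) :
    Disjoint (P2set D) (P3set D) := by
  have hn0 : 0 < n := by omega
  rw [Finset.disjoint_left]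
  intro z hz2 hz3
  obtain ⟨b, hb, hbe⟩ := mem_image.1 hz2
  obtain ⟨t, ht, hte⟩ := mem_image.1 hz3
  obtain ⟨⟨htD, ht4⟩, ht3⟩ := mem_T.1 ht
  obtain ⟨hbD, hb4⟩ := mem_B.1 hb
  have : b = nextc D t := next_inj hn0 hbD (nextc_mem hn0 htD) (by rw [hbe, ← hte])
  rw [this] at hb4
  omega

lemma subU (hn : 9 ≤ n) : Bset D ∪ P2set D ∪ P3set D ⊆ Dfin D := by
  have hn0 : 0 < n := by omega
  intro z hz
  rcases mem_union.1 hz with hz | hz3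
  · rcases mem_union.1 hz with hz | hz2
    · exact mem_Dfin.2 (mem_B.1 hz).1
    · obtain ⟨b, hb, rfl⟩ := mem_image.1 hz2
      exact mem_Dfin.2 (nextc_mem hn0 (mem_B.1 hb).1)
  · obtain ⟨t, ht, rfl⟩ := mem_image.1 hz3
    have htD := ((mem_T.1 ht).1).1
    exact mem_Dfin.2 (nextc_mem hn0 (nextc_mem hn0 htD))

lemma disjUR : Disjoint (Bset D ∪ P2set D ∪ P3set D) (Rset D) := by
  rw [Rset]
  exact Finset.disjoint_sdiff

lemma card_P2 (hn : 9 ≤ n) : (P2set D).card = (Bset D).card := by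
  have hn0 : 0 < n := by omega
  apply card_image_of_injOn
  intro a ha b hb h
  exact next_inj hn0 (mem_B.1 ha).1 (mem_B.1 hb).1 h

lemma card_P3 (hn : 9 ≤ n) : (P3set D).card = (Tset D).card := by
  have hn0 : 0 < n := by omega
  apply card_image_of_injOn
  intro a ha b hb h
  have haD := ((mem_T.1 ha).1).1
  have hbD := ((mem_T.1 hb).1).1
  exact next_inj hn0 haD hbD
    (next_inj hn0 (nextc_mem hn0 haD) (nextc_mem hn0 hbD) h)


lemma card_decomp (hn : 9 ≤ n) (hLD : IsLD (cycleG n) 2 D) :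
    (Dfin D).card = 2 * (Bset D).card + (Tset D).card + (Rset D).card := by
  have h1 : Dfin D = (Bset D ∪ P2set D ∪ P3set D) ∪ Rset D := by
    rw [Rset]
    exact (Finset.union_sdiff_of_subset (subU hn)).symm
  rw [h1, card_union_of_disjoint disjUR,
    card_union_of_disjoint (Finset.disjoint_union_left.2 ⟨disjBP3 hn hLD, disjP2P3 hn hLD⟩),
    card_union_of_disjoint (disjBP2 hn hLD), card_P2 hn, card_P3 hn]
  ring

lemma sum_decomp (hn : 9 ≤ n) (hLD : IsLD (cycleG n) 2 D) :
    (n : ℕ) = ∑ c ∈ Bset D, (sg D c + sg D (nextc D c))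
      + ∑ c ∈ Tset D, sg D (nextc D (nextc D c)) + ∑ c ∈ Rset D, sg D c := by
  have hn0 : 0 < n := by omega
  have h1 : Dfin D = (Bset D ∪ P2set D ∪ P3set D) ∪ Rset D := by
    rw [Rset]
    exact (Finset.union_sdiff_of_subset (subU hn)).symm
  have hsum : ∑ c ∈ Dfin D, sg D c = n := sum_sg (ld_nonempty hn hLD)
  rw [h1] at hsum
  rw [Finset.sum_union disjUR,
    Finset.sum_union (Finset.disjoint_union_left.2 ⟨disjBP3 hn hLD, disjP2P3 hn hLD⟩),
    Finset.sum_union (disjBP2 hn hLD)] at hsum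
  have hP2 : ∑ c ∈ P2set D, sg D c = ∑ c ∈ Bset D, sg D (nextc D c) := by
    rw [P2set]
    apply Finset.sum_image
    intro a ha b hb h
    exact next_inj hn0 (mem_B.1 ha).1 (mem_B.1 hb).1 h
  have hP3 : ∑ c ∈ P3set D, sg D c = ∑ c ∈ Tset D, sg D (nextc D (nextc D c)) := by
    rw [P3set]
    apply Finset.sum_image
    intro a ha b hb h
    have haD := ((mem_T.1 ha).1).1
    have hbD := ((mem_T.1 hb).1).1
    exact next_inj hn0 haD hbD
      (next_inj hn0 (nextc_mem hn0 haD) (nextc_mem hn0 hbD) h)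
  rw [hP2, hP3, ← Finset.sum_add_distrib] at hsum
  omega

lemma part1 (hn : 9 ≤ n) (hLD : IsLD (cycleG n) 2 D) :
    n + (Tset D).card ≤ 3 * (Dfin D).card := by
  have hsum := sum_decomp hn hLD
  have hcard := card_decomp hn hLD
  have hBsum : ∑ c ∈ Bset D, (sg D c + sg D (nextc D c))
      ≤ 6 * (Bset D).card + (Tset D).card := by
    have hsplit := Finset.sum_filter_add_sum_filter_not (Bset D)
      (fun c => sg D (nextc D c) = 3) (fun c => sg D c + sg D (nextc D c))
    have hTb : ∑ c ∈ Tset D, (sg D c + sg D (nextc D c)) ≤ 7 * (Tset D).card := by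
      apply le_trans (Finset.sum_le_card_nsmul _ _ 7 ?_) (by simp [mul_comm])
      intro c hc
      obtain ⟨⟨hcD, hc4⟩, hc3⟩ := mem_T.1 hc
      have := (pb2 hn hLD hcD hc4 hc3).1
      omega
    have hNb : ∑ c ∈ (Bset D).filter (fun c => ¬ sg D (nextc D c) = 3),
        (sg D c + sg D (nextc D c)) ≤ 6 * ((Bset D).filter (fun c => ¬ sg D (nextc D c) = 3)).card := by
      apply le_trans (Finset.sum_le_card_nsmul _ _ 6 ?_) (by simp [mul_comm])
      intro c hc
      obtain ⟨hcB, hc3⟩ := mem_filter.1 hc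
      exact pb1 hn hLD (mem_B.1 hcB).1 (mem_B.1 hcB).2 hc3
    have hcardsplit : (Tset D).card
        + ((Bset D).filter (fun c => ¬ sg D (nextc D c) = 3)).card = (Bset D).card := by
      rw [Tset]
      exact Finset.card_filter_add_card_filter_not (fun c => sg D (nextc D c) = 3)
    rw [← hsplit]
    have : (Tset D) = (Bset D).filter (fun c => sg D (nextc D c) = 3) := rfl
    rw [← this]
    omega
  have hTsum : ∑ c ∈ Tset D, sg D (nextc D (nextc D c)) ≤ (Tset D).card := by
    apply le_trans (Finset.sum_le_card_nsmul _ _ 1 ?_) (by simp)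
    intro c hc
    obtain ⟨⟨hcD, hc4⟩, hc3⟩ := mem_T.1 hc
    exact (pb2 hn hLD hcD hc4 hc3).2.le
  have hRsum : ∑ c ∈ Rset D, sg D c ≤ 3 * (Rset D).card := by
    apply le_trans (Finset.sum_le_card_nsmul _ _ 3 ?_) (by simp [mul_comm])
    intro c hc
    have hcd : c ∈ Dfin D := (Finset.sdiff_subset) hc
    have hcB : c ∉ Bset D := by
      intro hh
      have := Finset.mem_sdiff.1 hc
      exact this.2 (mem_union.2 (Or.inl (mem_union.2 (Or.inl hh))))
    have : ¬ 4 ≤ sg D c := fun hh => hcB (mem_B.2 ⟨mem_Dfin.1 hcd, hh⟩)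
    omega
  omega

lemma part2 (hn : 9 ≤ n) (hLD : IsLD (cycleG n) 2 D)
    (heq : n = 3 * (Dfin D).card) (hodd : Odd (Dfin D).card) : False := by
  have hn0 : 0 < n := by omega
  have hT : (Tset D).card = 0 := by have := part1 hn hLD; omega
  have hTe : Tset D = ∅ := card_eq_zero.1 hT
  have hsum := sum_decomp hn hLD
  rw [hTe, Finset.sum_empty] at hsum
  have hcard := card_decomp hn hLD
  rw [hT] at hcard
  have hBle : ∀ c ∈ Bset D, sg D c + sg D (nextc D c) ≤ 6 := by
    intro c hc
    have hc3 : sg D (nextc D c) ≠ 3 := by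
      intro hh
      have : c ∈ Tset D := mem_T.2 ⟨mem_B.1 hc, hh⟩
      rw [hTe] at this
      exact absurd this (Finset.notMem_empty c)
    exact pb1 hn hLD (mem_B.1 hc).1 (mem_B.1 hc).2 hc3
  have hRle : ∀ c ∈ Rset D, sg D c ≤ 3 := by
    intro c hc
    have hcd : c ∈ Dfin D := (Finset.sdiff_subset) hc
    have hcB : c ∉ Bset D := by
      intro hh
      exact (Finset.mem_sdiff.1 hc).2 (mem_union.2 (Or.inl (mem_union.2 (Or.inl hh))))
    have : ¬ 4 ≤ sg D c := fun hh => hcB (mem_B.2 ⟨mem_Dfin.1 hcd, hh⟩)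
    omega
  have hBsum : ∑ c ∈ Bset D, (sg D c + sg D (nextc D c)) ≤ 6 * (Bset D).card :=
    le_trans (Finset.sum_le_card_nsmul _ _ 6 hBle) (by simp [mul_comm])
  have hRsum : ∑ c ∈ Rset D, sg D c ≤ 3 * (Rset D).card :=
    le_trans (Finset.sum_le_card_nsmul _ _ 3 hRle) (by simp [mul_comm])
  have hBeq : ∑ c ∈ Bset D, (sg D c + sg D (nextc D c)) = 6 * (Bset D).card := by omega
  have hReq : ∑ c ∈ Rset D, sg D c = 3 * (Rset D).card := by omega
  have e1 : ∀ c ∈ Bset D, sg D c + sg D (nextc D c) = 6 := by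
    have h6 : ∑ c ∈ Bset D, (sg D c + sg D (nextc D c)) = ∑ _c ∈ Bset D, 6 := by
      rw [Finset.sum_const, smul_eq_mul]
      omega
    exact (Finset.sum_eq_sum_iff_of_le hBle).1 h6
  have e2 : ∀ c ∈ Rset D, sg D c = 3 := by
    have h3 : ∑ c ∈ Rset D, sg D c = ∑ _c ∈ Rset D, 3 := by
      rw [Finset.sum_const, smul_eq_mul]
      omega
    exact (Finset.sum_eq_sum_iff_of_le hRle).1 h3
  have hclass : ∀ z, z ∈ D → z ∈ Bset D ∨ z ∈ P2set D ∨ z ∈ Rset D := by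
    intro z hz
    have hzf : z ∈ Dfin D := mem_Dfin.2 hz
    by_cases h1 : z ∈ Bset D
    · exact Or.inl h1
    by_cases h2 : z ∈ P2set D
    · exact Or.inr (Or.inl h2)
    refine Or.inr (Or.inr (Finset.mem_sdiff.2 ⟨hzf, ?_⟩))
    intro hu
    rcases mem_union.1 hu with hu | hu3
    · rcases mem_union.1 hu with hu | hu2
      · exact h1 hu
      · exact h2 hu2
    · rw [P3set, hTe] at hu3
      simp at hu3
  have claim_ii : ∀ z, z ∈ D → sg D z = 3 → z - 1 ∈ D := by
    intro z hz h3
    rcases sg_three hn hLD hz h3 with h | h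
    · exact h
    exfalso
    have hwD : nextc D z ∈ D := nextc_mem hn0 hz
    have hw1 : sg D (nextc D z) = 1 := by
      have hle : sg D (nextc D z) ≤ 1 := by
        apply sg_le one_pos
        apply (show z + 4 = nextc D z + ((1:ℕ) : ZMod n) by
          rw [nextc_eq, h3]; push_cast; ring) ▸ h
      have := sg_pos hn0 hwD
      omega
    rcases hclass _ hwD with hB | hP2 | hR
    · have := (mem_B.1 hB).2; omega
    · obtain ⟨b, hb, hbe⟩ := mem_image.1 hP2
      have hbz : b = z := next_inj hn0 (mem_B.1 hb).1 hz hbe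
      rw [hbz] at hb
      have := (mem_B.1 hb).2; omega
    · have := e2 _ hR; omega
  have claim_c4 : ∀ z, z ∈ D → sg D z = 4 → sg D (nextc D (nextc D z)) = 4 := by
    intro z hz h4
    have hzB : z ∈ Bset D := mem_B.2 ⟨hz, by omega⟩
    have h2' : sg D (nextc D z) = 2 := by have := e1 z hzB; omega
    have hwD : nextc D z ∈ D := nextc_mem hn0 hz
    have hvD : nextc D (nextc D z) ∈ D := nextc_mem hn0 hwD
    have hv1 : nextc D (nextc D z) - 1 ∉ D := by
      have he : nextc D (nextc D z) - 1 = nextc D z + ((1:ℕ) : ZMod n) := by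
        rw [nextc_eq D (nextc D z), h2']; push_cast; ring
      intro hh
      exact sg_not_mem (D := D) (c := nextc D z) (t := 1) one_pos (by omega) (he ▸ hh)
    rcases hclass _ hvD with hB | hP2 | hR
    · have h45 := sg_le_five hn hLD hvD
      have h4v := (mem_B.1 hB).2
      rcases (show sg D (nextc D (nextc D z)) = 4 ∨ sg D (nextc D (nextc D z)) = 5 by omega)
        with h | h
      · exact h
      · exact absurd (sg_five_left hn hLD hvD h) hv1
    · obtain ⟨b, hb, hbe⟩ := mem_image.1 hP2
      have hbw : b = nextc D z := next_inj hn0 (mem_B.1 hb).1 hwD hbe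
      rw [hbw] at hb
      have := (mem_B.1 hb).2
      omega
    · have h3v := e2 _ hR
      exact absurd (claim_ii _ hvD h3v) hv1
  by_cases hA : ∃ a, a ∈ D ∧ sg D a = 4
  · obtain ⟨a, haD, ha4⟩ := hA
    have hstep : ∀ j, sg D ((nextc D)^[2*j] a) = 4 := by
      intro j
      induction j with
      | zero => simpa using ha4
      | succ j ih =>
          have hmem := iter_mem hn0 haD (2*j)
          have hc4 := claim_c4 _ hmem ih
          have he : (nextc D)^[2*(j+1)] a = nextc D (nextc D ((nextc D)^[2*j] a)) := by
            rw [show 2*(j+1) = 1 + (1 + 2*j) by ring, Function.iterate_add_apply,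
              Function.iterate_add_apply]
            simp
          rw [he]
          exact hc4
    have hall : ∀ m, sg D ((nextc D)^[m] a) = 4 := by
      intro m
      have hmul : ∀ q, (nextc D)^[q * (Dfin D).card] a = a := by
        intro q
        induction q with
        | zero => simp
        | succ q ih =>
            rw [show (q+1) * (Dfin D).card = q * (Dfin D).card + (Dfin D).card by ring,
              Function.iterate_add_apply, iter_card haD, ih]
      have hkey : (nextc D)^[m * ((Dfin D).card + 1)] a = (nextc D)^[m] a := by
        rw [show m * ((Dfin D).card + 1) = m + m * (Dfin D).card by ring,
          Function.iterate_add_apply, hmul]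
      obtain ⟨r, hr⟩ := hodd
      obtain ⟨e, he⟩ : ∃ e, m * ((Dfin D).card + 1) = 2 * e := ⟨m * (r + 1), by rw [hr]; ring⟩
      rw [← hkey, he]
      exact hstep e
    have h1 : sg D ((nextc D)^[1] a) = 4 := hall 1
    rw [Function.iterate_one] at h1
    have haB : a ∈ Bset D := mem_B.2 ⟨haD, by omega⟩
    have := e1 a haB
    omega
  · push_neg at hA
    have h3none : ∀ z, z ∈ D → sg D z ≠ 3 := by
      intro z hz h3
      have hwD := nextc_mem hn0 hz
      have hz2 : z + 2 ∉ D := by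
        have := sg_not_mem (D := D) (c := z) (t := 2) (by norm_num) (by omega)
        push_cast at this
        exact this
      have hw1 : nextc D z - 1 = z + 2 := by
        rw [nextc_eq, h3]; push_cast; ring
      rcases hclass _ hwD with hB | hP2 | hR
      · have h45 := sg_le_five hn hLD hwD
        have h4w := (mem_B.1 hB).2
        rcases (show sg D (nextc D z) = 4 ∨ sg D (nextc D z) = 5 by omega) with h | h
        · exact hA _ hwD h
        · exact hz2 (hw1 ▸ sg_five_left hn hLD hwD h)
      · obtain ⟨b, hb, hbe⟩ := mem_image.1 hP2
        have hbz : b = z := next_inj hn0 (mem_B.1 hb).1 hz hbe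
        rw [hbz] at hb
        have := (mem_B.1 hb).2
        omega
      · have h3w := e2 _ hR
        exact hz2 (hw1 ▸ claim_ii _ hwD h3w)
    have hRe : (Rset D).card = 0 := by
      rw [card_eq_zero, eq_empty_iff_forall_notMem]
      intro z hz
      have hzD : z ∈ D := mem_Dfin.1 ((Finset.sdiff_subset) hz)
      exact h3none z hzD (e2 z hz)
    obtain ⟨r, hr⟩ := hodd
    omega
end C

theorem lower_bound (k : ℕ) (hk : 1 ≤ k) {D : Set (ZMod (6*k+3))}
    (hLD : IsLD (cycleG (6*k+3)) 2 D) : 2*k+2 ≤ D.ncard := by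
  haveI : NeZero (6*k+3) := ⟨by omega⟩
  have hn : (9:ℕ) ≤ 6*k+3 := by omega
  have hcard : D.ncard = (Dfin D).card := by
    rw [Dfin, Set.ncard_eq_toFinset_card D D.toFinite]
  have h1 := part1 hn hLD
  rw [hcard]
  by_contra hlt
  push_neg at hlt
  have hd : (Dfin D).card = 2*k+1 := by omega
  exact part2 hn hLD (by omega) (by rw [hd]; exact ⟨k, by ring⟩)

-- C6 part
abbrev bmem (x y : ZMod 6) : Prop :=
  y = x ∨ y = x + 1 ∨ y = x - 1 ∨ y = x + 2 ∨ y = x - 2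

abbrev LD6 (F : Finset (ZMod 6)) : Prop :=
  (∀ x, x ∉ F → ∃ y ∈ F, bmem x y) ∧
    ∀ x, x ∉ F → ∀ y, y ∉ F → x ≠ y →
      F.filter (fun z => bmem x z) ≠ F.filter (fun z => bmem y z)

lemma Dr6_eq (D : Set (ZMod 6)) (x : ZMod 6) :
    Dr (cycleG 6) 2 D x = ↑((Dfin D).filter (fun z => bmem x z)) := by
  apply Set.ext
  intro y
  rw [mem_Dr_iff (by norm_num), Finset.coe_filter]
  simp only [Set.mem_setOf_eq, mem_Dfin]

lemma bridgeA {D : Set (ZMod 6)} (h : IsLD (cycleG 6) 2 D) : LD6 (Dfin D) := by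
  constructor
  · intro x hx
    obtain ⟨y, hy⟩ := h.1 x (by rwa [mem_Dfin] at hx)
    rw [mem_Dr_iff (by norm_num)] at hy
    exact ⟨y, mem_Dfin.2 hy.1, hy.2⟩
  · intro x hx y hy hne heq
    apply h.2 x (by rwa [mem_Dfin] at hx) y (by rwa [mem_Dfin] at hy) hne
    rw [Dr6_eq, Dr6_eq, heq]

lemma bridgeB {F : Finset (ZMod 6)} (h : LD6 F) : IsLD (cycleG 6) 2 (↑F : Set (ZMod 6)) := by
  have hDf : Dfin (↑F : Set (ZMod 6)) = F := by
    apply Finset.ext; intro z; rw [mem_Dfin]; simp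
  constructor
  · intro x hx
    obtain ⟨y, hyF, hyb⟩ := h.1 x (by simpa using hx)
    exact ⟨y, by simpa using hyF, (dist_le_two_iff (by norm_num)).2 hyb⟩
  · intro x hx y hy hne heq
    apply h.2 x (by simpa using hx) y (by simpa using hy) hne
    rw [Dr6_eq, Dr6_eq, hDf] at heq
    exact_mod_cast heq

lemma dec6 : ∀ F : Finset (ZMod 6), LD6 F → 3 ≤ F.card := by decide

theorem c6_least :
    IsLeast {m | ∃ D : Set (ZMod 6), IsLD (cycleG 6) 2 D ∧ D.ncard = m} 3 := by
  constructor
  · refine ⟨(↑({0,1,2} : Finset (ZMod 6)) : Set (ZMod 6)), bridgeB (by decide), ?_⟩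
    rw [Set.ncard_coe_finset]
    decide
  · rintro m ⟨D, hLD, rfl⟩
    have h3 := dec6 (Dfin D) (bridgeA hLD)
    rw [Set.ncard_eq_toFinset_card D D.toFinite]
    exact h3

section cast
variable {n : ℕ}

lemma cinj {a b : ℕ} (ha : a < n) (hb : b < n) :
    ((a : ZMod n) = (b : ZMod n)) ↔ a = b := by
  constructor
  · intro h
    have := congrArg ZMod.val h
    rwa [ZMod.val_cast_of_lt ha, ZMod.val_cast_of_lt hb] at this
  · intro h; rw [h]

lemma cast_eq_cast_add {v m j : ℕ} (hv : v < n) (hm : m < n) (hjn : j < n) :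
    ((m : ZMod n) = (v : ZMod n) + (j : ZMod n)) ↔ (m = v + j ∨ m + n = v + j) := by
  have hn0 : 0 < n := by omega
  constructor
  · intro h
    have h0 : (((m : ℤ) - v - j : ℤ) : ZMod n) = 0 := by push_cast; rw [h]; ring
    rw [ZMod.intCast_zmod_eq_zero_iff_dvd] at h0
    obtain ⟨q, hq⟩ := h0
    have hnz : (0:ℤ) < (n:ℤ) := by exact_mod_cast hn0
    have hq1 : q < 1 := by nlinarith [hq, (by exact_mod_cast hm : (m:ℤ) < n),
      (by positivity : (0:ℤ) ≤ (v:ℤ)), (by positivity : (0:ℤ) ≤ (j:ℤ))]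
    have hq2 : -2 < q := by nlinarith [hq, (by exact_mod_cast hv : (v:ℤ) < n),
      (by exact_mod_cast hjn : (j:ℤ) < n), (by positivity : (0:ℤ) ≤ (m:ℤ))]
    have : q = 0 ∨ q = -1 := by omega
    rcases this with rfl | rfl
    · left; omega
    · right; omega
  · rintro (h | h)
    · rw [show m = v + j from h]; push_cast; ring
    · have h2 : ((m + n : ℕ) : ZMod n) = ((v + j : ℕ) : ZMod n) := by rw [h]
      push_cast [ZMod.natCast_self] at h2
      simpa using h2

lemma mem_Dr_nat (hn : 5 ≤ n) {D : Set (ZMod n)} {m v : ℕ} (hm : m < n) (hv : v < n) :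
    ((m : ZMod n) ∈ Dr (cycleG n) 2 D (v : ZMod n)) ↔
      ((m : ZMod n) ∈ D ∧ (m = v ∨ (m = v + 1 ∨ m + n = v + 1) ∨ (v = m + 1 ∨ v + n = m + 1)
        ∨ (m = v + 2 ∨ m + n = v + 2) ∨ (v = m + 2 ∨ v + n = m + 2))) := by
  rw [mem_Dr_iff hn]
  apply and_congr_right
  intro _
  have e0 := cinj hm hv
  have e1 : ((m:ZMod n) = (v:ZMod n) + 1) ↔ (m = v + 1 ∨ m + n = v + 1) := by
    have := cast_eq_cast_add (v := v) (m := m) (j := 1) hv hm (by omega)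
    push_cast at this; exact this
  have e2 : ((m:ZMod n) = (v:ZMod n) + 2) ↔ (m = v + 2 ∨ m + n = v + 2) := by
    have := cast_eq_cast_add (v := v) (m := m) (j := 2) hv hm (by omega)
    push_cast at this; exact this
  have e3 : ((m:ZMod n) = (v:ZMod n) - 1) ↔ (v = m + 1 ∨ v + n = m + 1) := by
    have h' : ((m:ZMod n) = (v:ZMod n) - 1) ↔ ((v:ZMod n) = (m:ZMod n) + 1) := by
      constructor <;> intro h <;> linear_combination -h
    rw [h']
    have := cast_eq_cast_add (v := m) (m := v) (j := 1) hm hv (by omega)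
    push_cast at this; exact this
  have e4 : ((m:ZMod n) = (v:ZMod n) - 2) ↔ (v = m + 2 ∨ v + n = m + 2) := by
    have h' : ((m:ZMod n) = (v:ZMod n) - 2) ↔ ((v:ZMod n) = (m:ZMod n) + 2) := by
      constructor <;> intro h <;> linear_combination -h
    rw [h']
    have := cast_eq_cast_add (v := m) (m := v) (j := 2) hm hv (by omega)
    push_cast at this; exact this
  rw [e0, e1, e2, e3, e4]

lemma single_mem {a b : ℕ} (ha : a < n) (hb : b < n)
    (h : (a : ZMod n) ∈ ({((b:ℕ) : ZMod n)} : Set (ZMod n))) : a = b :=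
  (cinj ha hb).1 h

lemma pair_mem {a b c : ℕ} (ha : a < n) (hb : b < n) (hc : c < n)
    (h : (a : ZMod n) ∈ ({((b:ℕ) : ZMod n), ((c:ℕ) : ZMod n)} : Set (ZMod n))) :
    a = b ∨ a = c := by
  rcases h with h | h
  · exact Or.inl ((cinj ha hb).1 h)
  · exact Or.inr ((cinj ha hc).1 h)

lemma triple_mem {a b c d : ℕ} (ha : a < n) (hb : b < n) (hc : c < n) (hd : d < n)
    (h : (a : ZMod n) ∈ ({((b:ℕ) : ZMod n), ((c:ℕ) : ZMod n), ((d:ℕ) : ZMod n)} : Set (ZMod n))) :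
    a = b ∨ a = c ∨ a = d := by
  rcases h with h | h | h
  · exact Or.inl ((cinj ha hb).1 h)
  · exact Or.inr (Or.inl ((cinj ha hc).1 h))
  · exact Or.inr (Or.inr ((cinj ha hd).1 h))
end cast

-- the code
def Mk (k : ℕ) : Finset ℕ :=
  ((Finset.range (k+1)).image (fun i => 6*i)) ∪
    ((Finset.range k).image (fun i => 6*i+2)) ∪ {6*k+1}

lemma mem_Mk {k m : ℕ} :
    m ∈ Mk k ↔ (∃ i, i ≤ k ∧ m = 6*i) ∨ (∃ i, i < k ∧ m = 6*i+2) ∨ m = 6*k+1 := by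
  simp only [Mk, mem_union, mem_image, mem_range, mem_singleton]
  constructor
  · rintro ((⟨i, hi, he⟩ | ⟨i, hi, he⟩) | he)
    · exact Or.inl ⟨i, by omega, he.symm⟩
    · exact Or.inr (Or.inl ⟨i, hi, he.symm⟩)
    · exact Or.inr (Or.inr he)
  · rintro (⟨i, hi, he⟩ | ⟨i, hi, he⟩ | he)
    · exact Or.inl (Or.inl ⟨i, by omega, he.symm⟩)
    · exact Or.inl (Or.inr ⟨i, hi, he.symm⟩)
    · exact Or.inr he

lemma Mk_lt {k m : ℕ} (hk : 1 ≤ k) (hm : m ∈ Mk k) : m < 6*k+3 := by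
  rcases mem_Mk.1 hm with ⟨i, hi, rfl⟩ | ⟨i, hi, rfl⟩ | rfl <;> omega

lemma card_Mk (k : ℕ) : (Mk k).card = 2*k+2 := by
  have hinj1 : Function.Injective (fun i : ℕ => 6*i) := fun a b h => by
    dsimp at h; omega
  have hinj2 : Function.Injective (fun i : ℕ => 6*i+2) := fun a b h => by
    dsimp at h; omega
  have d1 : Disjoint ((Finset.range (k+1)).image (fun i => 6*i))
      ((Finset.range k).image (fun i => 6*i+2)) := by
    rw [Finset.disjoint_left]
    intro m h1 h2
    simp only [mem_image, mem_range] at h1 h2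
    obtain ⟨i, hi, rfl⟩ := h1
    obtain ⟨j, hj, hj2⟩ := h2
    omega
  have d2 : Disjoint (((Finset.range (k+1)).image (fun i => 6*i)) ∪
      ((Finset.range k).image (fun i => 6*i+2))) ({6*k+1} : Finset ℕ) := by
    rw [Finset.disjoint_left]
    intro m h1 h2
    simp only [mem_union, mem_image, mem_range, mem_singleton] at h1 h2
    rcases h1 with ⟨i, hi, rfl⟩ | ⟨i, hi, rfl⟩ <;> omega
  rw [Mk, card_union_of_disjoint d2, card_union_of_disjoint d1,
    card_image_of_injective _ hinj1, card_image_of_injective _ hinj2,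
    card_range, card_range, card_singleton]
  ring

def DkF (k : ℕ) : Finset (ZMod (6*k+3)) := (Mk k).image (fun m : ℕ => (m : ZMod (6*k+3)))
def Dk (k : ℕ) : Set (ZMod (6*k+3)) := ↑(DkF k)

lemma mem_Dk_cast {k m : ℕ} (hk : 1 ≤ k) (hm : m < 6*k+3) :
    ((m : ZMod (6*k+3)) ∈ Dk k) ↔ m ∈ Mk k := by
  simp only [Dk, DkF, Finset.coe_image, Set.mem_image, Finset.mem_coe]
  constructor
  · rintro ⟨m', hm', he⟩
    rwa [(cinj (Mk_lt hk hm') hm).1 he] at hm'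
  · intro h; exact ⟨m, h, rfl⟩

lemma ncard_Dk {k : ℕ} (hk : 1 ≤ k) : (Dk k).ncard = 2*k+2 := by
  rw [Dk, Set.ncard_coe_finset, DkF, card_image_of_injOn, card_Mk]
  intro a ha b hb h
  exact (cinj (Mk_lt hk (by simpa using ha)) (Mk_lt hk (by simpa using hb))).1 h

lemma classify {k v : ℕ} (hk : 1 ≤ k) (hv : v < 6*k+3) (hvM : v ∉ Mk k) :
    (∃ i, i < k ∧ v = 6*i+1) ∨ (∃ i, i < k ∧ v = 6*i+3) ∨ (∃ i, i < k ∧ v = 6*i+4) ∨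
    (∃ i, i + 1 < k ∧ v = 6*i+5) ∨ (∃ i, i + 1 = k ∧ v = 6*i+5) ∨ v = 6*k+2 := by
  have hd := Nat.div_add_mod v 6
  set i := v / 6 with hi
  set r := v % 6 with hr
  have hr6 : r < 6 := Nat.mod_lt _ (by norm_num)
  have hik : i ≤ k := by omega
  have hA : v ≠ 6*i := fun hh => hvM (mem_Mk.2 (Or.inl ⟨i, hik, hh⟩))
  have hB : i < k → v ≠ 6*i+2 := fun h hh => hvM (mem_Mk.2 (Or.inr (Or.inl ⟨i, h, hh⟩)))
  have hC : v ≠ 6*k+1 := fun hh => hvM (mem_Mk.2 (Or.inr (Or.inr hh)))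
  rcases (show r = 0 ∨ r = 1 ∨ r = 2 ∨ r = 3 ∨ r = 4 ∨ r = 5 by omega) with
    h | h | h | h | h | h
  · exact absurd (by omega) hA
  · by_cases hik2 : i < k
    · exact Or.inl ⟨i, hik2, by omega⟩
    · exact absurd (by omega) hC
  · by_cases hik2 : i < k
    · exact absurd (by omega) (hB hik2)
    · exact Or.inr (Or.inr (Or.inr (Or.inr (Or.inr (by omega)))))
  · exact Or.inr (Or.inl ⟨i, by omega, by omega⟩)
  · exact Or.inr (Or.inr (Or.inl ⟨i, by omega, by omega⟩))
  · by_cases hik2 : i + 1 < k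
    · exact Or.inr (Or.inr (Or.inr (Or.inl ⟨i, hik2, by omega⟩)))
    · exact Or.inr (Or.inr (Or.inr (Or.inr (Or.inl ⟨i, by omega, by omega⟩))))

lemma drA {k i : ℕ} (hk : 1 ≤ k) (hi : i < k) :
    Dr (cycleG (6*k+3)) 2 (Dk k) ((6*i+1 : ℕ) : ZMod (6*k+3)) =
      {((6*i : ℕ) : ZMod (6*k+3)), ((6*i+2 : ℕ) : ZMod (6*k+3))} := by
  have hn5 : (5:ℕ) ≤ 6*k+3 := by omega
  apply Set.ext; intro y
  constructor
  · intro hy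
    obtain ⟨m, hmM, rfl⟩ : ∃ m ∈ Mk k, ((m : ℕ) : ZMod (6*k+3)) = y := by
      simpa [Dk, DkF] using hy.1
    have hmlt := Mk_lt hk hmM
    rw [mem_Dr_nat hn5 hmlt (by omega)] at hy
    obtain ⟨-, hb⟩ := hy
    simp only [Set.mem_insert_iff, Set.mem_singleton_iff]
    rcases mem_Mk.1 hmM with ⟨j, hj, rfl⟩ | ⟨j, hj, rfl⟩ | rfl
    · have he : (6*j : ℕ) = 6*i := by omega
      rw [he]
      exact Or.inl rfl
    · have he : (6*j+2 : ℕ) = 6*i+2 := by omega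
      rw [he]
      exact Or.inr rfl
    · exfalso; omega
  · simp only [Set.mem_insert_iff, Set.mem_singleton_iff]
    intro hy
    rcases hy with rfl | rfl
    · rw [mem_Dr_nat hn5 (by omega) (by omega)]
      refine ⟨(mem_Dk_cast hk (by omega)).2 (mem_Mk.2 (Or.inl ⟨i, by omega, rfl⟩)), by omega⟩
    · rw [mem_Dr_nat hn5 (by omega) (by omega)]
      refine ⟨(mem_Dk_cast hk (by omega)).2 (mem_Mk.2 (Or.inr (Or.inl ⟨i, hi, rfl⟩))), by omega⟩

lemma drB {k i : ℕ} (hk : 1 ≤ k) (hi : i < k) :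
    Dr (cycleG (6*k+3)) 2 (Dk k) ((6*i+3 : ℕ) : ZMod (6*k+3)) =
      {((6*i+2 : ℕ) : ZMod (6*k+3))} := by
  have hn5 : (5:ℕ) ≤ 6*k+3 := by omega
  apply Set.ext; intro y
  constructor
  · intro hy
    obtain ⟨m, hmM, rfl⟩ : ∃ m ∈ Mk k, ((m : ℕ) : ZMod (6*k+3)) = y := by
      simpa [Dk, DkF] using hy.1
    have hmlt := Mk_lt hk hmM
    rw [mem_Dr_nat hn5 hmlt (by omega)] at hy
    obtain ⟨-, hb⟩ := hy
    simp only [Set.mem_insert_iff, Set.mem_singleton_iff]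
    rcases mem_Mk.1 hmM with ⟨j, hj, rfl⟩ | ⟨j, hj, rfl⟩ | rfl
    · exfalso; omega
    · have he : (6*j+2 : ℕ) = 6*i+2 := by omega
      rw [he]
    · exfalso; omega
  · simp only [Set.mem_insert_iff, Set.mem_singleton_iff]
    intro hy
    rcases hy with rfl
    · rw [mem_Dr_nat hn5 (by omega) (by omega)]
      refine ⟨(mem_Dk_cast hk (by omega)).2 (mem_Mk.2 (Or.inr (Or.inl ⟨i, hi, rfl⟩))), by omega⟩

lemma drC {k i : ℕ} (hk : 1 ≤ k) (hi : i < k) :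
    Dr (cycleG (6*k+3)) 2 (Dk k) ((6*i+4 : ℕ) : ZMod (6*k+3)) =
      {((6*i+2 : ℕ) : ZMod (6*k+3)), ((6*i+6 : ℕ) : ZMod (6*k+3))} := by
  have hn5 : (5:ℕ) ≤ 6*k+3 := by omega
  apply Set.ext; intro y
  constructor
  · intro hy
    obtain ⟨m, hmM, rfl⟩ : ∃ m ∈ Mk k, ((m : ℕ) : ZMod (6*k+3)) = y := by
      simpa [Dk, DkF] using hy.1
    have hmlt := Mk_lt hk hmM
    rw [mem_Dr_nat hn5 hmlt (by omega)] at hy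
    obtain ⟨-, hb⟩ := hy
    simp only [Set.mem_insert_iff, Set.mem_singleton_iff]
    rcases mem_Mk.1 hmM with ⟨j, hj, rfl⟩ | ⟨j, hj, rfl⟩ | rfl
    · have he : (6*j : ℕ) = 6*i+6 := by omega
      rw [he]
      exact Or.inr rfl
    · have he : (6*j+2 : ℕ) = 6*i+2 := by omega
      rw [he]
      exact Or.inl rfl
    · exfalso; omega
  · simp only [Set.mem_insert_iff, Set.mem_singleton_iff]
    intro hy
    rcases hy with rfl | rfl
    · rw [mem_Dr_nat hn5 (by omega) (by omega)]
      refine ⟨(mem_Dk_cast hk (by omega)).2 (mem_Mk.2 (Or.inr (Or.inl ⟨i, hi, rfl⟩))), by omega⟩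
    · rw [mem_Dr_nat hn5 (by omega) (by omega)]
      refine ⟨(mem_Dk_cast hk (by omega)).2 (mem_Mk.2 (Or.inl ⟨i+1, by omega, by ring⟩)), by omega⟩

lemma drD {k i : ℕ} (hk : 1 ≤ k) (hi : i + 1 < k) :
    Dr (cycleG (6*k+3)) 2 (Dk k) ((6*i+5 : ℕ) : ZMod (6*k+3)) =
      {((6*i+6 : ℕ) : ZMod (6*k+3))} := by
  have hn5 : (5:ℕ) ≤ 6*k+3 := by omega
  apply Set.ext; intro y
  constructor
  · intro hy
    obtain ⟨m, hmM, rfl⟩ : ∃ m ∈ Mk k, ((m : ℕ) : ZMod (6*k+3)) = y := by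
      simpa [Dk, DkF] using hy.1
    have hmlt := Mk_lt hk hmM
    rw [mem_Dr_nat hn5 hmlt (by omega)] at hy
    obtain ⟨-, hb⟩ := hy
    simp only [Set.mem_insert_iff, Set.mem_singleton_iff]
    rcases mem_Mk.1 hmM with ⟨j, hj, rfl⟩ | ⟨j, hj, rfl⟩ | rfl
    · have he : (6*j : ℕ) = 6*i+6 := by omega
      rw [he]
    · exfalso; omega
    · exfalso; omega
  · simp only [Set.mem_insert_iff, Set.mem_singleton_iff]
    intro hy
    rcases hy with rfl
    · rw [mem_Dr_nat hn5 (by omega) (by omega)]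
      refine ⟨(mem_Dk_cast hk (by omega)).2 (mem_Mk.2 (Or.inl ⟨i+1, by omega, by ring⟩)), by omega⟩

lemma drDp {k i : ℕ} (hk : 1 ≤ k) (hi : i + 1 = k) :
    Dr (cycleG (6*k+3)) 2 (Dk k) ((6*i+5 : ℕ) : ZMod (6*k+3)) =
      {((6*i+6 : ℕ) : ZMod (6*k+3)), ((6*i+7 : ℕ) : ZMod (6*k+3))} := by
  have hn5 : (5:ℕ) ≤ 6*k+3 := by omega
  apply Set.ext; intro y
  constructor
  · intro hy
    obtain ⟨m, hmM, rfl⟩ : ∃ m ∈ Mk k, ((m : ℕ) : ZMod (6*k+3)) = y := by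
      simpa [Dk, DkF] using hy.1
    have hmlt := Mk_lt hk hmM
    rw [mem_Dr_nat hn5 hmlt (by omega)] at hy
    obtain ⟨-, hb⟩ := hy
    simp only [Set.mem_insert_iff, Set.mem_singleton_iff]
    rcases mem_Mk.1 hmM with ⟨j, hj, rfl⟩ | ⟨j, hj, rfl⟩ | rfl
    · have he : (6*j : ℕ) = 6*i+6 := by omega
      rw [he]
      exact Or.inl rfl
    · exfalso; omega
    · have he : (6*k+1 : ℕ) = 6*i+7 := by omega
      rw [he]
      exact Or.inr rfl
  · simp only [Set.mem_insert_iff, Set.mem_singleton_iff]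
    intro hy
    rcases hy with rfl | rfl
    · rw [mem_Dr_nat hn5 (by omega) (by omega)]
      refine ⟨(mem_Dk_cast hk (by omega)).2 (mem_Mk.2 (Or.inl ⟨i+1, by omega, by ring⟩)), by omega⟩
    · rw [mem_Dr_nat hn5 (by omega) (by omega)]
      refine ⟨(mem_Dk_cast hk (by omega)).2 (mem_Mk.2 (Or.inr (Or.inr (by omega)))), by omega⟩

lemma drE {k i : ℕ} (hk : 1 ≤ k) (hi : 0 = i * 0) :
    Dr (cycleG (6*k+3)) 2 (Dk k) ((6*k+2 : ℕ) : ZMod (6*k+3)) =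
      {((0 : ℕ) : ZMod (6*k+3)), ((6*k : ℕ) : ZMod (6*k+3)), ((6*k+1 : ℕ) : ZMod (6*k+3))} := by
  have hn5 : (5:ℕ) ≤ 6*k+3 := by omega
  apply Set.ext; intro y
  constructor
  · intro hy
    obtain ⟨m, hmM, rfl⟩ : ∃ m ∈ Mk k, ((m : ℕ) : ZMod (6*k+3)) = y := by
      simpa [Dk, DkF] using hy.1
    have hmlt := Mk_lt hk hmM
    rw [mem_Dr_nat hn5 hmlt (by omega)] at hy
    obtain ⟨-, hb⟩ := hy
    simp only [Set.mem_insert_iff, Set.mem_singleton_iff]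
    rcases mem_Mk.1 hmM with ⟨j, hj, rfl⟩ | ⟨j, hj, rfl⟩ | rfl
    · rcases (show (6*j : ℕ) = 0 ∨ (6*j : ℕ) = 6*k by omega) with he | he
      · rw [he]; exact Or.inl rfl
      · rw [he]; exact Or.inr (Or.inl rfl)
    · exfalso; omega
    · have he : (6*k+1 : ℕ) = 6*k+1 := by omega
      rw [he]
      exact Or.inr (Or.inr rfl)
  · simp only [Set.mem_insert_iff, Set.mem_singleton_iff]
    intro hy
    rcases hy with rfl | rfl | rfl
    · rw [mem_Dr_nat hn5 (by omega) (by omega)]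
      refine ⟨(mem_Dk_cast hk (by omega)).2 (mem_Mk.2 (Or.inl ⟨0, by omega, by ring⟩)), by omega⟩
    · rw [mem_Dr_nat hn5 (by omega) (by omega)]
      refine ⟨(mem_Dk_cast hk (by omega)).2 (mem_Mk.2 (Or.inl ⟨k, by omega, rfl⟩)), by omega⟩
    · rw [mem_Dr_nat hn5 (by omega) (by omega)]
      refine ⟨(mem_Dk_cast hk (by omega)).2 (mem_Mk.2 (Or.inr (Or.inr rfl))), by omega⟩

theorem isLD_Dk {k : ℕ} (hk : 1 ≤ k) : IsLD (cycleG (6*k+3)) 2 (Dk k) := by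
  haveI : NeZero (6*k+3) := ⟨by omega⟩
  constructor
  · intro x hx
    have hv : x.val < 6*k+3 := ZMod.val_lt x
    have hxv : ((x.val : ℕ) : ZMod (6*k+3)) = x := by rw [ZMod.natCast_val, ZMod.cast_id]
    have hvM : x.val ∉ Mk k := fun hh => hx (by rw [← hxv]; exact (mem_Dk_cast hk hv).2 hh)
    rcases classify hk hv hvM with ⟨i,hi,he⟩|⟨i,hi,he⟩|⟨i,hi,he⟩|⟨i,hi,he⟩|⟨i,hi,he⟩|he
    · rw [← hxv, he, drA hk hi]; exact ⟨_, Set.mem_insert _ _⟩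
    · rw [← hxv, he, drB hk hi]; exact ⟨_, Set.mem_singleton _⟩
    · rw [← hxv, he, drC hk hi]; exact ⟨_, Set.mem_insert _ _⟩
    · rw [← hxv, he, drD hk hi]; exact ⟨_, Set.mem_singleton _⟩
    · rw [← hxv, he, drDp hk hi]; exact ⟨_, Set.mem_insert _ _⟩
    · rw [← hxv, he, drE hk (by omega : (0:ℕ) = 0 * 0)]; exact ⟨_, Set.mem_insert _ _⟩
  · intro x hx y hy hne heq
    have hvx : x.val < 6*k+3 := ZMod.val_lt x
    have hxv : ((x.val : ℕ) : ZMod (6*k+3)) = x := by rw [ZMod.natCast_val, ZMod.cast_id]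
    have hvMx : x.val ∉ Mk k := fun hh => hx (by rw [← hxv]; exact (mem_Dk_cast hk hvx).2 hh)
    have hvy : y.val < 6*k+3 := ZMod.val_lt y
    have hyv : ((y.val : ℕ) : ZMod (6*k+3)) = y := by rw [ZMod.natCast_val, ZMod.cast_id]
    have hvMy : y.val ∉ Mk k := fun hh => hy (by rw [← hyv]; exact (mem_Dk_cast hk hvy).2 hh)
    rw [← hxv, ← hyv] at heq
    rcases classify hk hvx hvMx with ⟨i,hi,hex⟩|⟨i,hi,hex⟩|⟨i,hi,hex⟩|⟨i,hi,hex⟩|⟨i,hi,hex⟩|hex <;>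
      rcases classify hk hvy hvMy with ⟨j,hj,hey⟩|⟨j,hj,hey⟩|⟨j,hj,hey⟩|⟨j,hj,hey⟩|⟨j,hj,hey⟩|hey
    · rw [hex, drA hk hi, hey, drA hk hj] at heq
      have q1 : ((6*i : ℕ) : ZMod (6*k+3)) ∈ ({((6*i : ℕ) : ZMod (6*k+3)), ((6*i+2 : ℕ) : ZMod (6*k+3))} : Set (ZMod (6*k+3))) := Set.mem_insert _ _
      rw [heq] at q1
      have g1 := pair_mem (by omega) (by omega) (by omega) q1
      have q2 : ((6*i+2 : ℕ) : ZMod (6*k+3)) ∈ ({((6*i : ℕ) : ZMod (6*k+3)), ((6*i+2 : ℕ) : ZMod (6*k+3))} : Set (ZMod (6*k+3))) := Set.mem_insert_iff.2 (Or.inr rfl)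
      rw [heq] at q2
      have g2 := pair_mem (by omega) (by omega) (by omega) q2
      have q3 : ((6*j : ℕ) : ZMod (6*k+3)) ∈ ({((6*j : ℕ) : ZMod (6*k+3)), ((6*j+2 : ℕ) : ZMod (6*k+3))} : Set (ZMod (6*k+3))) := Set.mem_insert _ _
      rw [← heq] at q3
      have g3 := pair_mem (by omega) (by omega) (by omega) q3
      have q4 : ((6*j+2 : ℕ) : ZMod (6*k+3)) ∈ ({((6*j : ℕ) : ZMod (6*k+3)), ((6*j+2 : ℕ) : ZMod (6*k+3))} : Set (ZMod (6*k+3))) := Set.mem_insert_iff.2 (Or.inr rfl)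
      rw [← heq] at q4
      have g4 := pair_mem (by omega) (by omega) (by omega) q4
      exact hne (by rw [← hxv, ← hyv, hex, hey]; all_goals exact (cinj (by omega) (by omega)).2 (by omega))
    · rw [hex, drA hk hi, hey, drB hk hj] at heq
      have q1 : ((6*i : ℕ) : ZMod (6*k+3)) ∈ ({((6*i : ℕ) : ZMod (6*k+3)), ((6*i+2 : ℕ) : ZMod (6*k+3))} : Set (ZMod (6*k+3))) := Set.mem_insert _ _
      rw [heq] at q1
      have g1 := single_mem (by omega) (by omega) q1
      have q2 : ((6*i+2 : ℕ) : ZMod (6*k+3)) ∈ ({((6*i : ℕ) : ZMod (6*k+3)), ((6*i+2 : ℕ) : ZMod (6*k+3))} : Set (ZMod (6*k+3))) := Set.mem_insert_iff.2 (Or.inr rfl)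
      rw [heq] at q2
      have g2 := single_mem (by omega) (by omega) q2
      have q3 : ((6*j+2 : ℕ) : ZMod (6*k+3)) ∈ ({((6*j+2 : ℕ) : ZMod (6*k+3))} : Set (ZMod (6*k+3))) := Set.mem_singleton _
      rw [← heq] at q3
      have g3 := pair_mem (by omega) (by omega) (by omega) q3
      omega
    · rw [hex, drA hk hi, hey, drC hk hj] at heq
      have q1 : ((6*i : ℕ) : ZMod (6*k+3)) ∈ ({((6*i : ℕ) : ZMod (6*k+3)), ((6*i+2 : ℕ) : ZMod (6*k+3))} : Set (ZMod (6*k+3))) := Set.mem_insert _ _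
      rw [heq] at q1
      have g1 := pair_mem (by omega) (by omega) (by omega) q1
      have q2 : ((6*i+2 : ℕ) : ZMod (6*k+3)) ∈ ({((6*i : ℕ) : ZMod (6*k+3)), ((6*i+2 : ℕ) : ZMod (6*k+3))} : Set (ZMod (6*k+3))) := Set.mem_insert_iff.2 (Or.inr rfl)
      rw [heq] at q2
      have g2 := pair_mem (by omega) (by omega) (by omega) q2
      have q3 : ((6*j+2 : ℕ) : ZMod (6*k+3)) ∈ ({((6*j+2 : ℕ) : ZMod (6*k+3)), ((6*j+6 : ℕ) : ZMod (6*k+3))} : Set (ZMod (6*k+3))) := Set.mem_insert _ _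
      rw [← heq] at q3
      have g3 := pair_mem (by omega) (by omega) (by omega) q3
      have q4 : ((6*j+6 : ℕ) : ZMod (6*k+3)) ∈ ({((6*j+2 : ℕ) : ZMod (6*k+3)), ((6*j+6 : ℕ) : ZMod (6*k+3))} : Set (ZMod (6*k+3))) := Set.mem_insert_iff.2 (Or.inr rfl)
      rw [← heq] at q4
      have g4 := pair_mem (by omega) (by omega) (by omega) q4
      omega
    · rw [hex, drA hk hi, hey, drD hk hj] at heq
      have q1 : ((6*i : ℕ) : ZMod (6*k+3)) ∈ ({((6*i : ℕ) : ZMod (6*k+3)), ((6*i+2 : ℕ) : ZMod (6*k+3))} : Set (ZMod (6*k+3))) := Set.mem_insert _ _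
      rw [heq] at q1
      have g1 := single_mem (by omega) (by omega) q1
      have q2 : ((6*i+2 : ℕ) : ZMod (6*k+3)) ∈ ({((6*i : ℕ) : ZMod (6*k+3)), ((6*i+2 : ℕ) : ZMod (6*k+3))} : Set (ZMod (6*k+3))) := Set.mem_insert_iff.2 (Or.inr rfl)
      rw [heq] at q2
      have g2 := single_mem (by omega) (by omega) q2
      have q3 : ((6*j+6 : ℕ) : ZMod (6*k+3)) ∈ ({((6*j+6 : ℕ) : ZMod (6*k+3))} : Set (ZMod (6*k+3))) := Set.mem_singleton _
      rw [← heq] at q3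
      have g3 := pair_mem (by omega) (by omega) (by omega) q3
      omega
    · rw [hex, drA hk hi, hey, drDp hk hj] at heq
      have q1 : ((6*i : ℕ) : ZMod (6*k+3)) ∈ ({((6*i : ℕ) : ZMod (6*k+3)), ((6*i+2 : ℕ) : ZMod (6*k+3))} : Set (ZMod (6*k+3))) := Set.mem_insert _ _
      rw [heq] at q1
      have g1 := pair_mem (by omega) (by omega) (by omega) q1
      have q2 : ((6*i+2 : ℕ) : ZMod (6*k+3)) ∈ ({((6*i : ℕ) : ZMod (6*k+3)), ((6*i+2 : ℕ) : ZMod (6*k+3))} : Set (ZMod (6*k+3))) := Set.mem_insert_iff.2 (Or.inr rfl)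
      rw [heq] at q2
      have g2 := pair_mem (by omega) (by omega) (by omega) q2
      have q3 : ((6*j+6 : ℕ) : ZMod (6*k+3)) ∈ ({((6*j+6 : ℕ) : ZMod (6*k+3)), ((6*j+7 : ℕ) : ZMod (6*k+3))} : Set (ZMod (6*k+3))) := Set.mem_insert _ _
      rw [← heq] at q3
      have g3 := pair_mem (by omega) (by omega) (by omega) q3
      have q4 : ((6*j+7 : ℕ) : ZMod (6*k+3)) ∈ ({((6*j+6 : ℕ) : ZMod (6*k+3)), ((6*j+7 : ℕ) : ZMod (6*k+3))} : Set (ZMod (6*k+3))) := Set.mem_insert_iff.2 (Or.inr rfl)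
      rw [← heq] at q4
      have g4 := pair_mem (by omega) (by omega) (by omega) q4
      omega
    · rw [hex, drA hk hi, hey, drE hk (by omega : (0:ℕ) = 0 * 0)] at heq
      have q1 : ((6*i : ℕ) : ZMod (6*k+3)) ∈ ({((6*i : ℕ) : ZMod (6*k+3)), ((6*i+2 : ℕ) : ZMod (6*k+3))} : Set (ZMod (6*k+3))) := Set.mem_insert _ _
      rw [heq] at q1
      have g1 := triple_mem (by omega) (by omega) (by omega) (by omega) q1
      have q2 : ((6*i+2 : ℕ) : ZMod (6*k+3)) ∈ ({((6*i : ℕ) : ZMod (6*k+3)), ((6*i+2 : ℕ) : ZMod (6*k+3))} : Set (ZMod (6*k+3))) := Set.mem_insert_iff.2 (Or.inr rfl)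
      rw [heq] at q2
      have g2 := triple_mem (by omega) (by omega) (by omega) (by omega) q2
      have q3 : ((0 : ℕ) : ZMod (6*k+3)) ∈ ({((0 : ℕ) : ZMod (6*k+3)), ((6*k : ℕ) : ZMod (6*k+3)), ((6*k+1 : ℕ) : ZMod (6*k+3))} : Set (ZMod (6*k+3))) := Set.mem_insert _ _
      rw [← heq] at q3
      have g3 := pair_mem (by omega) (by omega) (by omega) q3
      have q4 : ((6*k : ℕ) : ZMod (6*k+3)) ∈ ({((0 : ℕ) : ZMod (6*k+3)), ((6*k : ℕ) : ZMod (6*k+3)), ((6*k+1 : ℕ) : ZMod (6*k+3))} : Set (ZMod (6*k+3))) := Set.mem_insert_iff.2 (Or.inr (Set.mem_insert _ _))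
      rw [← heq] at q4
      have g4 := pair_mem (by omega) (by omega) (by omega) q4
      have q5 : ((6*k+1 : ℕ) : ZMod (6*k+3)) ∈ ({((0 : ℕ) : ZMod (6*k+3)), ((6*k : ℕ) : ZMod (6*k+3)), ((6*k+1 : ℕ) : ZMod (6*k+3))} : Set (ZMod (6*k+3))) := Set.mem_insert_iff.2 (Or.inr (Set.mem_insert_iff.2 (Or.inr rfl)))
      rw [← heq] at q5
      have g5 := pair_mem (by omega) (by omega) (by omega) q5
      omega
    · rw [hex, drB hk hi, hey, drA hk hj] at heq
      have q1 : ((6*i+2 : ℕ) : ZMod (6*k+3)) ∈ ({((6*i+2 : ℕ) : ZMod (6*k+3))} : Set (ZMod (6*k+3))) := Set.mem_singleton _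
      rw [heq] at q1
      have g1 := pair_mem (by omega) (by omega) (by omega) q1
      have q2 : ((6*j : ℕ) : ZMod (6*k+3)) ∈ ({((6*j : ℕ) : ZMod (6*k+3)), ((6*j+2 : ℕ) : ZMod (6*k+3))} : Set (ZMod (6*k+3))) := Set.mem_insert _ _
      rw [← heq] at q2
      have g2 := single_mem (by omega) (by omega) q2
      have q3 : ((6*j+2 : ℕ) : ZMod (6*k+3)) ∈ ({((6*j : ℕ) : ZMod (6*k+3)), ((6*j+2 : ℕ) : ZMod (6*k+3))} : Set (ZMod (6*k+3))) := Set.mem_insert_iff.2 (Or.inr rfl)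
      rw [← heq] at q3
      have g3 := single_mem (by omega) (by omega) q3
      omega
    · rw [hex, drB hk hi, hey, drB hk hj] at heq
      have q1 : ((6*i+2 : ℕ) : ZMod (6*k+3)) ∈ ({((6*i+2 : ℕ) : ZMod (6*k+3))} : Set (ZMod (6*k+3))) := Set.mem_singleton _
      rw [heq] at q1
      have g1 := single_mem (by omega) (by omega) q1
      have q2 : ((6*j+2 : ℕ) : ZMod (6*k+3)) ∈ ({((6*j+2 : ℕ) : ZMod (6*k+3))} : Set (ZMod (6*k+3))) := Set.mem_singleton _
      rw [← heq] at q2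
      have g2 := single_mem (by omega) (by omega) q2
      exact hne (by rw [← hxv, ← hyv, hex, hey]; all_goals exact (cinj (by omega) (by omega)).2 (by omega))
    · rw [hex, drB hk hi, hey, drC hk hj] at heq
      have q1 : ((6*i+2 : ℕ) : ZMod (6*k+3)) ∈ ({((6*i+2 : ℕ) : ZMod (6*k+3))} : Set (ZMod (6*k+3))) := Set.mem_singleton _
      rw [heq] at q1
      have g1 := pair_mem (by omega) (by omega) (by omega) q1
      have q2 : ((6*j+2 : ℕ) : ZMod (6*k+3)) ∈ ({((6*j+2 : ℕ) : ZMod (6*k+3)), ((6*j+6 : ℕ) : ZMod (6*k+3))} : Set (ZMod (6*k+3))) := Set.mem_insert _ _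
      rw [← heq] at q2
      have g2 := single_mem (by omega) (by omega) q2
      have q3 : ((6*j+6 : ℕ) : ZMod (6*k+3)) ∈ ({((6*j+2 : ℕ) : ZMod (6*k+3)), ((6*j+6 : ℕ) : ZMod (6*k+3))} : Set (ZMod (6*k+3))) := Set.mem_insert_iff.2 (Or.inr rfl)
      rw [← heq] at q3
      have g3 := single_mem (by omega) (by omega) q3
      omega
    · rw [hex, drB hk hi, hey, drD hk hj] at heq
      have q1 : ((6*i+2 : ℕ) : ZMod (6*k+3)) ∈ ({((6*i+2 : ℕ) : ZMod (6*k+3))} : Set (ZMod (6*k+3))) := Set.mem_singleton _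
      rw [heq] at q1
      have g1 := single_mem (by omega) (by omega) q1
      have q2 : ((6*j+6 : ℕ) : ZMod (6*k+3)) ∈ ({((6*j+6 : ℕ) : ZMod (6*k+3))} : Set (ZMod (6*k+3))) := Set.mem_singleton _
      rw [← heq] at q2
      have g2 := single_mem (by omega) (by omega) q2
      omega
    · rw [hex, drB hk hi, hey, drDp hk hj] at heq
      have q1 : ((6*i+2 : ℕ) : ZMod (6*k+3)) ∈ ({((6*i+2 : ℕ) : ZMod (6*k+3))} : Set (ZMod (6*k+3))) := Set.mem_singleton _
      rw [heq] at q1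
      have g1 := pair_mem (by omega) (by omega) (by omega) q1
      have q2 : ((6*j+6 : ℕ) : ZMod (6*k+3)) ∈ ({((6*j+6 : ℕ) : ZMod (6*k+3)), ((6*j+7 : ℕ) : ZMod (6*k+3))} : Set (ZMod (6*k+3))) := Set.mem_insert _ _
      rw [← heq] at q2
      have g2 := single_mem (by omega) (by omega) q2
      have q3 : ((6*j+7 : ℕ) : ZMod (6*k+3)) ∈ ({((6*j+6 : ℕ) : ZMod (6*k+3)), ((6*j+7 : ℕ) : ZMod (6*k+3))} : Set (ZMod (6*k+3))) := Set.mem_insert_iff.2 (Or.inr rfl)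
      rw [← heq] at q3
      have g3 := single_mem (by omega) (by omega) q3
      omega
    · rw [hex, drB hk hi, hey, drE hk (by omega : (0:ℕ) = 0 * 0)] at heq
      have q1 : ((6*i+2 : ℕ) : ZMod (6*k+3)) ∈ ({((6*i+2 : ℕ) : ZMod (6*k+3))} : Set (ZMod (6*k+3))) := Set.mem_singleton _
      rw [heq] at q1
      have g1 := triple_mem (by omega) (by omega) (by omega) (by omega) q1
      have q2 : ((0 : ℕ) : ZMod (6*k+3)) ∈ ({((0 : ℕ) : ZMod (6*k+3)), ((6*k : ℕ) : ZMod (6*k+3)), ((6*k+1 : ℕ) : ZMod (6*k+3))} : Set (ZMod (6*k+3))) := Set.mem_insert _ _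
      rw [← heq] at q2
      have g2 := single_mem (by omega) (by omega) q2
      have q3 : ((6*k : ℕ) : ZMod (6*k+3)) ∈ ({((0 : ℕ) : ZMod (6*k+3)), ((6*k : ℕ) : ZMod (6*k+3)), ((6*k+1 : ℕ) : ZMod (6*k+3))} : Set (ZMod (6*k+3))) := Set.mem_insert_iff.2 (Or.inr (Set.mem_insert _ _))
      rw [← heq] at q3
      have g3 := single_mem (by omega) (by omega) q3
      have q4 : ((6*k+1 : ℕ) : ZMod (6*k+3)) ∈ ({((0 : ℕ) : ZMod (6*k+3)), ((6*k : ℕ) : ZMod (6*k+3)), ((6*k+1 : ℕ) : ZMod (6*k+3))} : Set (ZMod (6*k+3))) := Set.mem_insert_iff.2 (Or.inr (Set.mem_insert_iff.2 (Or.inr rfl)))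
      rw [← heq] at q4
      have g4 := single_mem (by omega) (by omega) q4
      omega
    · rw [hex, drC hk hi, hey, drA hk hj] at heq
      have q1 : ((6*i+2 : ℕ) : ZMod (6*k+3)) ∈ ({((6*i+2 : ℕ) : ZMod (6*k+3)), ((6*i+6 : ℕ) : ZMod (6*k+3))} : Set (ZMod (6*k+3))) := Set.mem_insert _ _
      rw [heq] at q1
      have g1 := pair_mem (by omega) (by omega) (by omega) q1
      have q2 : ((6*i+6 : ℕ) : ZMod (6*k+3)) ∈ ({((6*i+2 : ℕ) : ZMod (6*k+3)), ((6*i+6 : ℕ) : ZMod (6*k+3))} : Set (ZMod (6*k+3))) := Set.mem_insert_iff.2 (Or.inr rfl)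
      rw [heq] at q2
      have g2 := pair_mem (by omega) (by omega) (by omega) q2
      have q3 : ((6*j : ℕ) : ZMod (6*k+3)) ∈ ({((6*j : ℕ) : ZMod (6*k+3)), ((6*j+2 : ℕ) : ZMod (6*k+3))} : Set (ZMod (6*k+3))) := Set.mem_insert _ _
      rw [← heq] at q3
      have g3 := pair_mem (by omega) (by omega) (by omega) q3
      have q4 : ((6*j+2 : ℕ) : ZMod (6*k+3)) ∈ ({((6*j : ℕ) : ZMod (6*k+3)), ((6*j+2 : ℕ) : ZMod (6*k+3))} : Set (ZMod (6*k+3))) := Set.mem_insert_iff.2 (Or.inr rfl)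
      rw [← heq] at q4
      have g4 := pair_mem (by omega) (by omega) (by omega) q4
      omega
    · rw [hex, drC hk hi, hey, drB hk hj] at heq
      have q1 : ((6*i+2 : ℕ) : ZMod (6*k+3)) ∈ ({((6*i+2 : ℕ) : ZMod (6*k+3)), ((6*i+6 : ℕ) : ZMod (6*k+3))} : Set (ZMod (6*k+3))) := Set.mem_insert _ _
      rw [heq] at q1
      have g1 := single_mem (by omega) (by omega) q1
      have q2 : ((6*i+6 : ℕ) : ZMod (6*k+3)) ∈ ({((6*i+2 : ℕ) : ZMod (6*k+3)), ((6*i+6 : ℕ) : ZMod (6*k+3))} : Set (ZMod (6*k+3))) := Set.mem_insert_iff.2 (Or.inr rfl)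
      rw [heq] at q2
      have g2 := single_mem (by omega) (by omega) q2
      have q3 : ((6*j+2 : ℕ) : ZMod (6*k+3)) ∈ ({((6*j+2 : ℕ) : ZMod (6*k+3))} : Set (ZMod (6*k+3))) := Set.mem_singleton _
      rw [← heq] at q3
      have g3 := pair_mem (by omega) (by omega) (by omega) q3
      omega
    · rw [hex, drC hk hi, hey, drC hk hj] at heq
      have q1 : ((6*i+2 : ℕ) : ZMod (6*k+3)) ∈ ({((6*i+2 : ℕ) : ZMod (6*k+3)), ((6*i+6 : ℕ) : ZMod (6*k+3))} : Set (ZMod (6*k+3))) := Set.mem_insert _ _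
      rw [heq] at q1
      have g1 := pair_mem (by omega) (by omega) (by omega) q1
      have q2 : ((6*i+6 : ℕ) : ZMod (6*k+3)) ∈ ({((6*i+2 : ℕ) : ZMod (6*k+3)), ((6*i+6 : ℕ) : ZMod (6*k+3))} : Set (ZMod (6*k+3))) := Set.mem_insert_iff.2 (Or.inr rfl)
      rw [heq] at q2
      have g2 := pair_mem (by omega) (by omega) (by omega) q2
      have q3 : ((6*j+2 : ℕ) : ZMod (6*k+3)) ∈ ({((6*j+2 : ℕ) : ZMod (6*k+3)), ((6*j+6 : ℕ) : ZMod (6*k+3))} : Set (ZMod (6*k+3))) := Set.mem_insert _ _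
      rw [← heq] at q3
      have g3 := pair_mem (by omega) (by omega) (by omega) q3
      have q4 : ((6*j+6 : ℕ) : ZMod (6*k+3)) ∈ ({((6*j+2 : ℕ) : ZMod (6*k+3)), ((6*j+6 : ℕ) : ZMod (6*k+3))} : Set (ZMod (6*k+3))) := Set.mem_insert_iff.2 (Or.inr rfl)
      rw [← heq] at q4
      have g4 := pair_mem (by omega) (by omega) (by omega) q4
      exact hne (by rw [← hxv, ← hyv, hex, hey]; all_goals exact (cinj (by omega) (by omega)).2 (by omega))
    · rw [hex, drC hk hi, hey, drD hk hj] at heq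
      have q1 : ((6*i+2 : ℕ) : ZMod (6*k+3)) ∈ ({((6*i+2 : ℕ) : ZMod (6*k+3)), ((6*i+6 : ℕ) : ZMod (6*k+3))} : Set (ZMod (6*k+3))) := Set.mem_insert _ _
      rw [heq] at q1
      have g1 := single_mem (by omega) (by omega) q1
      have q2 : ((6*i+6 : ℕ) : ZMod (6*k+3)) ∈ ({((6*i+2 : ℕ) : ZMod (6*k+3)), ((6*i+6 : ℕ) : ZMod (6*k+3))} : Set (ZMod (6*k+3))) := Set.mem_insert_iff.2 (Or.inr rfl)
      rw [heq] at q2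
      have g2 := single_mem (by omega) (by omega) q2
      have q3 : ((6*j+6 : ℕ) : ZMod (6*k+3)) ∈ ({((6*j+6 : ℕ) : ZMod (6*k+3))} : Set (ZMod (6*k+3))) := Set.mem_singleton _
      rw [← heq] at q3
      have g3 := pair_mem (by omega) (by omega) (by omega) q3
      omega
    · rw [hex, drC hk hi, hey, drDp hk hj] at heq
      have q1 : ((6*i+2 : ℕ) : ZMod (6*k+3)) ∈ ({((6*i+2 : ℕ) : ZMod (6*k+3)), ((6*i+6 : ℕ) : ZMod (6*k+3))} : Set (ZMod (6*k+3))) := Set.mem_insert _ _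
      rw [heq] at q1
      have g1 := pair_mem (by omega) (by omega) (by omega) q1
      have q2 : ((6*i+6 : ℕ) : ZMod (6*k+3)) ∈ ({((6*i+2 : ℕ) : ZMod (6*k+3)), ((6*i+6 : ℕ) : ZMod (6*k+3))} : Set (ZMod (6*k+3))) := Set.mem_insert_iff.2 (Or.inr rfl)
      rw [heq] at q2
      have g2 := pair_mem (by omega) (by omega) (by omega) q2
      have q3 : ((6*j+6 : ℕ) : ZMod (6*k+3)) ∈ ({((6*j+6 : ℕ) : ZMod (6*k+3)), ((6*j+7 : ℕ) : ZMod (6*k+3))} : Set (ZMod (6*k+3))) := Set.mem_insert _ _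
      rw [← heq] at q3
      have g3 := pair_mem (by omega) (by omega) (by omega) q3
      have q4 : ((6*j+7 : ℕ) : ZMod (6*k+3)) ∈ ({((6*j+6 : ℕ) : ZMod (6*k+3)), ((6*j+7 : ℕ) : ZMod (6*k+3))} : Set (ZMod (6*k+3))) := Set.mem_insert_iff.2 (Or.inr rfl)
      rw [← heq] at q4
      have g4 := pair_mem (by omega) (by omega) (by omega) q4
      omega
    · rw [hex, drC hk hi, hey, drE hk (by omega : (0:ℕ) = 0 * 0)] at heq
      have q1 : ((6*i+2 : ℕ) : ZMod (6*k+3)) ∈ ({((6*i+2 : ℕ) : ZMod (6*k+3)), ((6*i+6 : ℕ) : ZMod (6*k+3))} : Set (ZMod (6*k+3))) := Set.mem_insert _ _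
      rw [heq] at q1
      have g1 := triple_mem (by omega) (by omega) (by omega) (by omega) q1
      have q2 : ((6*i+6 : ℕ) : ZMod (6*k+3)) ∈ ({((6*i+2 : ℕ) : ZMod (6*k+3)), ((6*i+6 : ℕ) : ZMod (6*k+3))} : Set (ZMod (6*k+3))) := Set.mem_insert_iff.2 (Or.inr rfl)
      rw [heq] at q2
      have g2 := triple_mem (by omega) (by omega) (by omega) (by omega) q2
      have q3 : ((0 : ℕ) : ZMod (6*k+3)) ∈ ({((0 : ℕ) : ZMod (6*k+3)), ((6*k : ℕ) : ZMod (6*k+3)), ((6*k+1 : ℕ) : ZMod (6*k+3))} : Set (ZMod (6*k+3))) := Set.mem_insert _ _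
      rw [← heq] at q3
      have g3 := pair_mem (by omega) (by omega) (by omega) q3
      have q4 : ((6*k : ℕ) : ZMod (6*k+3)) ∈ ({((0 : ℕ) : ZMod (6*k+3)), ((6*k : ℕ) : ZMod (6*k+3)), ((6*k+1 : ℕ) : ZMod (6*k+3))} : Set (ZMod (6*k+3))) := Set.mem_insert_iff.2 (Or.inr (Set.mem_insert _ _))
      rw [← heq] at q4
      have g4 := pair_mem (by omega) (by omega) (by omega) q4
      have q5 : ((6*k+1 : ℕ) : ZMod (6*k+3)) ∈ ({((0 : ℕ) : ZMod (6*k+3)), ((6*k : ℕ) : ZMod (6*k+3)), ((6*k+1 : ℕ) : ZMod (6*k+3))} : Set (ZMod (6*k+3))) := Set.mem_insert_iff.2 (Or.inr (Set.mem_insert_iff.2 (Or.inr rfl)))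
      rw [← heq] at q5
      have g5 := pair_mem (by omega) (by omega) (by omega) q5
      omega
    · rw [hex, drD hk hi, hey, drA hk hj] at heq
      have q1 : ((6*i+6 : ℕ) : ZMod (6*k+3)) ∈ ({((6*i+6 : ℕ) : ZMod (6*k+3))} : Set (ZMod (6*k+3))) := Set.mem_singleton _
      rw [heq] at q1
      have g1 := pair_mem (by omega) (by omega) (by omega) q1
      have q2 : ((6*j : ℕ) : ZMod (6*k+3)) ∈ ({((6*j : ℕ) : ZMod (6*k+3)), ((6*j+2 : ℕ) : ZMod (6*k+3))} : Set (ZMod (6*k+3))) := Set.mem_insert _ _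
      rw [← heq] at q2
      have g2 := single_mem (by omega) (by omega) q2
      have q3 : ((6*j+2 : ℕ) : ZMod (6*k+3)) ∈ ({((6*j : ℕ) : ZMod (6*k+3)), ((6*j+2 : ℕ) : ZMod (6*k+3))} : Set (ZMod (6*k+3))) := Set.mem_insert_iff.2 (Or.inr rfl)
      rw [← heq] at q3
      have g3 := single_mem (by omega) (by omega) q3
      omega
    · rw [hex, drD hk hi, hey, drB hk hj] at heq
      have q1 : ((6*i+6 : ℕ) : ZMod (6*k+3)) ∈ ({((6*i+6 : ℕ) : ZMod (6*k+3))} : Set (ZMod (6*k+3))) := Set.mem_singleton _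
      rw [heq] at q1
      have g1 := single_mem (by omega) (by omega) q1
      have q2 : ((6*j+2 : ℕ) : ZMod (6*k+3)) ∈ ({((6*j+2 : ℕ) : ZMod (6*k+3))} : Set (ZMod (6*k+3))) := Set.mem_singleton _
      rw [← heq] at q2
      have g2 := single_mem (by omega) (by omega) q2
      omega
    · rw [hex, drD hk hi, hey, drC hk hj] at heq
      have q1 : ((6*i+6 : ℕ) : ZMod (6*k+3)) ∈ ({((6*i+6 : ℕ) : ZMod (6*k+3))} : Set (ZMod (6*k+3))) := Set.mem_singleton _
      rw [heq] at q1
      have g1 := pair_mem (by omega) (by omega) (by omega) q1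
      have q2 : ((6*j+2 : ℕ) : ZMod (6*k+3)) ∈ ({((6*j+2 : ℕ) : ZMod (6*k+3)), ((6*j+6 : ℕ) : ZMod (6*k+3))} : Set (ZMod (6*k+3))) := Set.mem_insert _ _
      rw [← heq] at q2
      have g2 := single_mem (by omega) (by omega) q2
      have q3 : ((6*j+6 : ℕ) : ZMod (6*k+3)) ∈ ({((6*j+2 : ℕ) : ZMod (6*k+3)), ((6*j+6 : ℕ) : ZMod (6*k+3))} : Set (ZMod (6*k+3))) := Set.mem_insert_iff.2 (Or.inr rfl)
      rw [← heq] at q3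
      have g3 := single_mem (by omega) (by omega) q3
      omega
    · rw [hex, drD hk hi, hey, drD hk hj] at heq
      have q1 : ((6*i+6 : ℕ) : ZMod (6*k+3)) ∈ ({((6*i+6 : ℕ) : ZMod (6*k+3))} : Set (ZMod (6*k+3))) := Set.mem_singleton _
      rw [heq] at q1
      have g1 := single_mem (by omega) (by omega) q1
      have q2 : ((6*j+6 : ℕ) : ZMod (6*k+3)) ∈ ({((6*j+6 : ℕ) : ZMod (6*k+3))} : Set (ZMod (6*k+3))) := Set.mem_singleton _
      rw [← heq] at q2
      have g2 := single_mem (by omega) (by omega) q2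
      exact hne (by rw [← hxv, ← hyv, hex, hey]; all_goals exact (cinj (by omega) (by omega)).2 (by omega))
    · rw [hex, drD hk hi, hey, drDp hk hj] at heq
      have q1 : ((6*i+6 : ℕ) : ZMod (6*k+3)) ∈ ({((6*i+6 : ℕ) : ZMod (6*k+3))} : Set (ZMod (6*k+3))) := Set.mem_singleton _
      rw [heq] at q1
      have g1 := pair_mem (by omega) (by omega) (by omega) q1
      have q2 : ((6*j+6 : ℕ) : ZMod (6*k+3)) ∈ ({((6*j+6 : ℕ) : ZMod (6*k+3)), ((6*j+7 : ℕ) : ZMod (6*k+3))} : Set (ZMod (6*k+3))) := Set.mem_insert _ _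
      rw [← heq] at q2
      have g2 := single_mem (by omega) (by omega) q2
      have q3 : ((6*j+7 : ℕ) : ZMod (6*k+3)) ∈ ({((6*j+6 : ℕ) : ZMod (6*k+3)), ((6*j+7 : ℕ) : ZMod (6*k+3))} : Set (ZMod (6*k+3))) := Set.mem_insert_iff.2 (Or.inr rfl)
      rw [← heq] at q3
      have g3 := single_mem (by omega) (by omega) q3
      omega
    · rw [hex, drD hk hi, hey, drE hk (by omega : (0:ℕ) = 0 * 0)] at heq
      have q1 : ((6*i+6 : ℕ) : ZMod (6*k+3)) ∈ ({((6*i+6 : ℕ) : ZMod (6*k+3))} : Set (ZMod (6*k+3))) := Set.mem_singleton _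
      rw [heq] at q1
      have g1 := triple_mem (by omega) (by omega) (by omega) (by omega) q1
      have q2 : ((0 : ℕ) : ZMod (6*k+3)) ∈ ({((0 : ℕ) : ZMod (6*k+3)), ((6*k : ℕ) : ZMod (6*k+3)), ((6*k+1 : ℕ) : ZMod (6*k+3))} : Set (ZMod (6*k+3))) := Set.mem_insert _ _
      rw [← heq] at q2
      have g2 := single_mem (by omega) (by omega) q2
      have q3 : ((6*k : ℕ) : ZMod (6*k+3)) ∈ ({((0 : ℕ) : ZMod (6*k+3)), ((6*k : ℕ) : ZMod (6*k+3)), ((6*k+1 : ℕ) : ZMod (6*k+3))} : Set (ZMod (6*k+3))) := Set.mem_insert_iff.2 (Or.inr (Set.mem_insert _ _))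
      rw [← heq] at q3
      have g3 := single_mem (by omega) (by omega) q3
      have q4 : ((6*k+1 : ℕ) : ZMod (6*k+3)) ∈ ({((0 : ℕ) : ZMod (6*k+3)), ((6*k : ℕ) : ZMod (6*k+3)), ((6*k+1 : ℕ) : ZMod (6*k+3))} : Set (ZMod (6*k+3))) := Set.mem_insert_iff.2 (Or.inr (Set.mem_insert_iff.2 (Or.inr rfl)))
      rw [← heq] at q4
      have g4 := single_mem (by omega) (by omega) q4
      omega
    · rw [hex, drDp hk hi, hey, drA hk hj] at heq
      have q1 : ((6*i+6 : ℕ) : ZMod (6*k+3)) ∈ ({((6*i+6 : ℕ) : ZMod (6*k+3)), ((6*i+7 : ℕ) : ZMod (6*k+3))} : Set (ZMod (6*k+3))) := Set.mem_insert _ _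
      rw [heq] at q1
      have g1 := pair_mem (by omega) (by omega) (by omega) q1
      have q2 : ((6*i+7 : ℕ) : ZMod (6*k+3)) ∈ ({((6*i+6 : ℕ) : ZMod (6*k+3)), ((6*i+7 : ℕ) : ZMod (6*k+3))} : Set (ZMod (6*k+3))) := Set.mem_insert_iff.2 (Or.inr rfl)
      rw [heq] at q2
      have g2 := pair_mem (by omega) (by omega) (by omega) q2
      have q3 : ((6*j : ℕ) : ZMod (6*k+3)) ∈ ({((6*j : ℕ) : ZMod (6*k+3)), ((6*j+2 : ℕ) : ZMod (6*k+3))} : Set (ZMod (6*k+3))) := Set.mem_insert _ _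
      rw [← heq] at q3
      have g3 := pair_mem (by omega) (by omega) (by omega) q3
      have q4 : ((6*j+2 : ℕ) : ZMod (6*k+3)) ∈ ({((6*j : ℕ) : ZMod (6*k+3)), ((6*j+2 : ℕ) : ZMod (6*k+3))} : Set (ZMod (6*k+3))) := Set.mem_insert_iff.2 (Or.inr rfl)
      rw [← heq] at q4
      have g4 := pair_mem (by omega) (by omega) (by omega) q4
      omega
    · rw [hex, drDp hk hi, hey, drB hk hj] at heq
      have q1 : ((6*i+6 : ℕ) : ZMod (6*k+3)) ∈ ({((6*i+6 : ℕ) : ZMod (6*k+3)), ((6*i+7 : ℕ) : ZMod (6*k+3))} : Set (ZMod (6*k+3))) := Set.mem_insert _ _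
      rw [heq] at q1
      have g1 := single_mem (by omega) (by omega) q1
      have q2 : ((6*i+7 : ℕ) : ZMod (6*k+3)) ∈ ({((6*i+6 : ℕ) : ZMod (6*k+3)), ((6*i+7 : ℕ) : ZMod (6*k+3))} : Set (ZMod (6*k+3))) := Set.mem_insert_iff.2 (Or.inr rfl)
      rw [heq] at q2
      have g2 := single_mem (by omega) (by omega) q2
      have q3 : ((6*j+2 : ℕ) : ZMod (6*k+3)) ∈ ({((6*j+2 : ℕ) : ZMod (6*k+3))} : Set (ZMod (6*k+3))) := Set.mem_singleton _
      rw [← heq] at q3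
      have g3 := pair_mem (by omega) (by omega) (by omega) q3
      omega
    · rw [hex, drDp hk hi, hey, drC hk hj] at heq
      have q1 : ((6*i+6 : ℕ) : ZMod (6*k+3)) ∈ ({((6*i+6 : ℕ) : ZMod (6*k+3)), ((6*i+7 : ℕ) : ZMod (6*k+3))} : Set (ZMod (6*k+3))) := Set.mem_insert _ _
      rw [heq] at q1
      have g1 := pair_mem (by omega) (by omega) (by omega) q1
      have q2 : ((6*i+7 : ℕ) : ZMod (6*k+3)) ∈ ({((6*i+6 : ℕ) : ZMod (6*k+3)), ((6*i+7 : ℕ) : ZMod (6*k+3))} : Set (ZMod (6*k+3))) := Set.mem_insert_iff.2 (Or.inr rfl)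
      rw [heq] at q2
      have g2 := pair_mem (by omega) (by omega) (by omega) q2
      have q3 : ((6*j+2 : ℕ) : ZMod (6*k+3)) ∈ ({((6*j+2 : ℕ) : ZMod (6*k+3)), ((6*j+6 : ℕ) : ZMod (6*k+3))} : Set (ZMod (6*k+3))) := Set.mem_insert _ _
      rw [← heq] at q3
      have g3 := pair_mem (by omega) (by omega) (by omega) q3
      have q4 : ((6*j+6 : ℕ) : ZMod (6*k+3)) ∈ ({((6*j+2 : ℕ) : ZMod (6*k+3)), ((6*j+6 : ℕ) : ZMod (6*k+3))} : Set (ZMod (6*k+3))) := Set.mem_insert_iff.2 (Or.inr rfl)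
      rw [← heq] at q4
      have g4 := pair_mem (by omega) (by omega) (by omega) q4
      omega
    · rw [hex, drDp hk hi, hey, drD hk hj] at heq
      have q1 : ((6*i+6 : ℕ) : ZMod (6*k+3)) ∈ ({((6*i+6 : ℕ) : ZMod (6*k+3)), ((6*i+7 : ℕ) : ZMod (6*k+3))} : Set (ZMod (6*k+3))) := Set.mem_insert _ _
      rw [heq] at q1
      have g1 := single_mem (by omega) (by omega) q1
      have q2 : ((6*i+7 : ℕ) : ZMod (6*k+3)) ∈ ({((6*i+6 : ℕ) : ZMod (6*k+3)), ((6*i+7 : ℕ) : ZMod (6*k+3))} : Set (ZMod (6*k+3))) := Set.mem_insert_iff.2 (Or.inr rfl)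
      rw [heq] at q2
      have g2 := single_mem (by omega) (by omega) q2
      have q3 : ((6*j+6 : ℕ) : ZMod (6*k+3)) ∈ ({((6*j+6 : ℕ) : ZMod (6*k+3))} : Set (ZMod (6*k+3))) := Set.mem_singleton _
      rw [← heq] at q3
      have g3 := pair_mem (by omega) (by omega) (by omega) q3
      omega
    · rw [hex, drDp hk hi, hey, drDp hk hj] at heq
      have q1 : ((6*i+6 : ℕ) : ZMod (6*k+3)) ∈ ({((6*i+6 : ℕ) : ZMod (6*k+3)), ((6*i+7 : ℕ) : ZMod (6*k+3))} : Set (ZMod (6*k+3))) := Set.mem_insert _ _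
      rw [heq] at q1
      have g1 := pair_mem (by omega) (by omega) (by omega) q1
      have q2 : ((6*i+7 : ℕ) : ZMod (6*k+3)) ∈ ({((6*i+6 : ℕ) : ZMod (6*k+3)), ((6*i+7 : ℕ) : ZMod (6*k+3))} : Set (ZMod (6*k+3))) := Set.mem_insert_iff.2 (Or.inr rfl)
      rw [heq] at q2
      have g2 := pair_mem (by omega) (by omega) (by omega) q2
      have q3 : ((6*j+6 : ℕ) : ZMod (6*k+3)) ∈ ({((6*j+6 : ℕ) : ZMod (6*k+3)), ((6*j+7 : ℕ) : ZMod (6*k+3))} : Set (ZMod (6*k+3))) := Set.mem_insert _ _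
      rw [← heq] at q3
      have g3 := pair_mem (by omega) (by omega) (by omega) q3
      have q4 : ((6*j+7 : ℕ) : ZMod (6*k+3)) ∈ ({((6*j+6 : ℕ) : ZMod (6*k+3)), ((6*j+7 : ℕ) : ZMod (6*k+3))} : Set (ZMod (6*k+3))) := Set.mem_insert_iff.2 (Or.inr rfl)
      rw [← heq] at q4
      have g4 := pair_mem (by omega) (by omega) (by omega) q4
      exact hne (by rw [← hxv, ← hyv, hex, hey]; all_goals exact (cinj (by omega) (by omega)).2 (by omega))
    · rw [hex, drDp hk hi, hey, drE hk (by omega : (0:ℕ) = 0 * 0)] at heq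
      have q1 : ((6*i+6 : ℕ) : ZMod (6*k+3)) ∈ ({((6*i+6 : ℕ) : ZMod (6*k+3)), ((6*i+7 : ℕ) : ZMod (6*k+3))} : Set (ZMod (6*k+3))) := Set.mem_insert _ _
      rw [heq] at q1
      have g1 := triple_mem (by omega) (by omega) (by omega) (by omega) q1
      have q2 : ((6*i+7 : ℕ) : ZMod (6*k+3)) ∈ ({((6*i+6 : ℕ) : ZMod (6*k+3)), ((6*i+7 : ℕ) : ZMod (6*k+3))} : Set (ZMod (6*k+3))) := Set.mem_insert_iff.2 (Or.inr rfl)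
      rw [heq] at q2
      have g2 := triple_mem (by omega) (by omega) (by omega) (by omega) q2
      have q3 : ((0 : ℕ) : ZMod (6*k+3)) ∈ ({((0 : ℕ) : ZMod (6*k+3)), ((6*k : ℕ) : ZMod (6*k+3)), ((6*k+1 : ℕ) : ZMod (6*k+3))} : Set (ZMod (6*k+3))) := Set.mem_insert _ _
      rw [← heq] at q3
      have g3 := pair_mem (by omega) (by omega) (by omega) q3
      have q4 : ((6*k : ℕ) : ZMod (6*k+3)) ∈ ({((0 : ℕ) : ZMod (6*k+3)), ((6*k : ℕ) : ZMod (6*k+3)), ((6*k+1 : ℕ) : ZMod (6*k+3))} : Set (ZMod (6*k+3))) := Set.mem_insert_iff.2 (Or.inr (Set.mem_insert _ _))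
      rw [← heq] at q4
      have g4 := pair_mem (by omega) (by omega) (by omega) q4
      have q5 : ((6*k+1 : ℕ) : ZMod (6*k+3)) ∈ ({((0 : ℕ) : ZMod (6*k+3)), ((6*k : ℕ) : ZMod (6*k+3)), ((6*k+1 : ℕ) : ZMod (6*k+3))} : Set (ZMod (6*k+3))) := Set.mem_insert_iff.2 (Or.inr (Set.mem_insert_iff.2 (Or.inr rfl)))
      rw [← heq] at q5
      have g5 := pair_mem (by omega) (by omega) (by omega) q5
      omega
    · rw [hex, drE hk (by omega : (0:ℕ) = 0 * 0), hey, drA hk hj] at heq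
      have q1 : ((0 : ℕ) : ZMod (6*k+3)) ∈ ({((0 : ℕ) : ZMod (6*k+3)), ((6*k : ℕ) : ZMod (6*k+3)), ((6*k+1 : ℕ) : ZMod (6*k+3))} : Set (ZMod (6*k+3))) := Set.mem_insert _ _
      rw [heq] at q1
      have g1 := pair_mem (by omega) (by omega) (by omega) q1
      have q2 : ((6*k : ℕ) : ZMod (6*k+3)) ∈ ({((0 : ℕ) : ZMod (6*k+3)), ((6*k : ℕ) : ZMod (6*k+3)), ((6*k+1 : ℕ) : ZMod (6*k+3))} : Set (ZMod (6*k+3))) := Set.mem_insert_iff.2 (Or.inr (Set.mem_insert _ _))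
      rw [heq] at q2
      have g2 := pair_mem (by omega) (by omega) (by omega) q2
      have q3 : ((6*k+1 : ℕ) : ZMod (6*k+3)) ∈ ({((0 : ℕ) : ZMod (6*k+3)), ((6*k : ℕ) : ZMod (6*k+3)), ((6*k+1 : ℕ) : ZMod (6*k+3))} : Set (ZMod (6*k+3))) := Set.mem_insert_iff.2 (Or.inr (Set.mem_insert_iff.2 (Or.inr rfl)))
      rw [heq] at q3
      have g3 := pair_mem (by omega) (by omega) (by omega) q3
      have q4 : ((6*j : ℕ) : ZMod (6*k+3)) ∈ ({((6*j : ℕ) : ZMod (6*k+3)), ((6*j+2 : ℕ) : ZMod (6*k+3))} : Set (ZMod (6*k+3))) := Set.mem_insert _ _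
      rw [← heq] at q4
      have g4 := triple_mem (by omega) (by omega) (by omega) (by omega) q4
      have q5 : ((6*j+2 : ℕ) : ZMod (6*k+3)) ∈ ({((6*j : ℕ) : ZMod (6*k+3)), ((6*j+2 : ℕ) : ZMod (6*k+3))} : Set (ZMod (6*k+3))) := Set.mem_insert_iff.2 (Or.inr rfl)
      rw [← heq] at q5
      have g5 := triple_mem (by omega) (by omega) (by omega) (by omega) q5
      omega
    · rw [hex, drE hk (by omega : (0:ℕ) = 0 * 0), hey, drB hk hj] at heq
      have q1 : ((0 : ℕ) : ZMod (6*k+3)) ∈ ({((0 : ℕ) : ZMod (6*k+3)), ((6*k : ℕ) : ZMod (6*k+3)), ((6*k+1 : ℕ) : ZMod (6*k+3))} : Set (ZMod (6*k+3))) := Set.mem_insert _ _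
      rw [heq] at q1
      have g1 := single_mem (by omega) (by omega) q1
      have q2 : ((6*k : ℕ) : ZMod (6*k+3)) ∈ ({((0 : ℕ) : ZMod (6*k+3)), ((6*k : ℕ) : ZMod (6*k+3)), ((6*k+1 : ℕ) : ZMod (6*k+3))} : Set (ZMod (6*k+3))) := Set.mem_insert_iff.2 (Or.inr (Set.mem_insert _ _))
      rw [heq] at q2
      have g2 := single_mem (by omega) (by omega) q2
      have q3 : ((6*k+1 : ℕ) : ZMod (6*k+3)) ∈ ({((0 : ℕ) : ZMod (6*k+3)), ((6*k : ℕ) : ZMod (6*k+3)), ((6*k+1 : ℕ) : ZMod (6*k+3))} : Set (ZMod (6*k+3))) := Set.mem_insert_iff.2 (Or.inr (Set.mem_insert_iff.2 (Or.inr rfl)))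
      rw [heq] at q3
      have g3 := single_mem (by omega) (by omega) q3
      have q4 : ((6*j+2 : ℕ) : ZMod (6*k+3)) ∈ ({((6*j+2 : ℕ) : ZMod (6*k+3))} : Set (ZMod (6*k+3))) := Set.mem_singleton _
      rw [← heq] at q4
      have g4 := triple_mem (by omega) (by omega) (by omega) (by omega) q4
      omega
    · rw [hex, drE hk (by omega : (0:ℕ) = 0 * 0), hey, drC hk hj] at heq
      have q1 : ((0 : ℕ) : ZMod (6*k+3)) ∈ ({((0 : ℕ) : ZMod (6*k+3)), ((6*k : ℕ) : ZMod (6*k+3)), ((6*k+1 : ℕ) : ZMod (6*k+3))} : Set (ZMod (6*k+3))) := Set.mem_insert _ _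
      rw [heq] at q1
      have g1 := pair_mem (by omega) (by omega) (by omega) q1
      have q2 : ((6*k : ℕ) : ZMod (6*k+3)) ∈ ({((0 : ℕ) : ZMod (6*k+3)), ((6*k : ℕ) : ZMod (6*k+3)), ((6*k+1 : ℕ) : ZMod (6*k+3))} : Set (ZMod (6*k+3))) := Set.mem_insert_iff.2 (Or.inr (Set.mem_insert _ _))
      rw [heq] at q2
      have g2 := pair_mem (by omega) (by omega) (by omega) q2
      have q3 : ((6*k+1 : ℕ) : ZMod (6*k+3)) ∈ ({((0 : ℕ) : ZMod (6*k+3)), ((6*k : ℕ) : ZMod (6*k+3)), ((6*k+1 : ℕ) : ZMod (6*k+3))} : Set (ZMod (6*k+3))) := Set.mem_insert_iff.2 (Or.inr (Set.mem_insert_iff.2 (Or.inr rfl)))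
      rw [heq] at q3
      have g3 := pair_mem (by omega) (by omega) (by omega) q3
      have q4 : ((6*j+2 : ℕ) : ZMod (6*k+3)) ∈ ({((6*j+2 : ℕ) : ZMod (6*k+3)), ((6*j+6 : ℕ) : ZMod (6*k+3))} : Set (ZMod (6*k+3))) := Set.mem_insert _ _
      rw [← heq] at q4
      have g4 := triple_mem (by omega) (by omega) (by omega) (by omega) q4
      have q5 : ((6*j+6 : ℕ) : ZMod (6*k+3)) ∈ ({((6*j+2 : ℕ) : ZMod (6*k+3)), ((6*j+6 : ℕ) : ZMod (6*k+3))} : Set (ZMod (6*k+3))) := Set.mem_insert_iff.2 (Or.inr rfl)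
      rw [← heq] at q5
      have g5 := triple_mem (by omega) (by omega) (by omega) (by omega) q5
      omega
    · rw [hex, drE hk (by omega : (0:ℕ) = 0 * 0), hey, drD hk hj] at heq
      have q1 : ((0 : ℕ) : ZMod (6*k+3)) ∈ ({((0 : ℕ) : ZMod (6*k+3)), ((6*k : ℕ) : ZMod (6*k+3)), ((6*k+1 : ℕ) : ZMod (6*k+3))} : Set (ZMod (6*k+3))) := Set.mem_insert _ _
      rw [heq] at q1
      have g1 := single_mem (by omega) (by omega) q1
      have q2 : ((6*k : ℕ) : ZMod (6*k+3)) ∈ ({((0 : ℕ) : ZMod (6*k+3)), ((6*k : ℕ) : ZMod (6*k+3)), ((6*k+1 : ℕ) : ZMod (6*k+3))} : Set (ZMod (6*k+3))) := Set.mem_insert_iff.2 (Or.inr (Set.mem_insert _ _))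
      rw [heq] at q2
      have g2 := single_mem (by omega) (by omega) q2
      have q3 : ((6*k+1 : ℕ) : ZMod (6*k+3)) ∈ ({((0 : ℕ) : ZMod (6*k+3)), ((6*k : ℕ) : ZMod (6*k+3)), ((6*k+1 : ℕ) : ZMod (6*k+3))} : Set (ZMod (6*k+3))) := Set.mem_insert_iff.2 (Or.inr (Set.mem_insert_iff.2 (Or.inr rfl)))
      rw [heq] at q3
      have g3 := single_mem (by omega) (by omega) q3
      have q4 : ((6*j+6 : ℕ) : ZMod (6*k+3)) ∈ ({((6*j+6 : ℕ) : ZMod (6*k+3))} : Set (ZMod (6*k+3))) := Set.mem_singleton _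
      rw [← heq] at q4
      have g4 := triple_mem (by omega) (by omega) (by omega) (by omega) q4
      omega
    · rw [hex, drE hk (by omega : (0:ℕ) = 0 * 0), hey, drDp hk hj] at heq
      have q1 : ((0 : ℕ) : ZMod (6*k+3)) ∈ ({((0 : ℕ) : ZMod (6*k+3)), ((6*k : ℕ) : ZMod (6*k+3)), ((6*k+1 : ℕ) : ZMod (6*k+3))} : Set (ZMod (6*k+3))) := Set.mem_insert _ _
      rw [heq] at q1
      have g1 := pair_mem (by omega) (by omega) (by omega) q1
      have q2 : ((6*k : ℕ) : ZMod (6*k+3)) ∈ ({((0 : ℕ) : ZMod (6*k+3)), ((6*k : ℕ) : ZMod (6*k+3)), ((6*k+1 : ℕ) : ZMod (6*k+3))} : Set (ZMod (6*k+3))) := Set.mem_insert_iff.2 (Or.inr (Set.mem_insert _ _))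
      rw [heq] at q2
      have g2 := pair_mem (by omega) (by omega) (by omega) q2
      have q3 : ((6*k+1 : ℕ) : ZMod (6*k+3)) ∈ ({((0 : ℕ) : ZMod (6*k+3)), ((6*k : ℕ) : ZMod (6*k+3)), ((6*k+1 : ℕ) : ZMod (6*k+3))} : Set (ZMod (6*k+3))) := Set.mem_insert_iff.2 (Or.inr (Set.mem_insert_iff.2 (Or.inr rfl)))
      rw [heq] at q3
      have g3 := pair_mem (by omega) (by omega) (by omega) q3
      have q4 : ((6*j+6 : ℕ) : ZMod (6*k+3)) ∈ ({((6*j+6 : ℕ) : ZMod (6*k+3)), ((6*j+7 : ℕ) : ZMod (6*k+3))} : Set (ZMod (6*k+3))) := Set.mem_insert _ _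
      rw [← heq] at q4
      have g4 := triple_mem (by omega) (by omega) (by omega) (by omega) q4
      have q5 : ((6*j+7 : ℕ) : ZMod (6*k+3)) ∈ ({((6*j+6 : ℕ) : ZMod (6*k+3)), ((6*j+7 : ℕ) : ZMod (6*k+3))} : Set (ZMod (6*k+3))) := Set.mem_insert_iff.2 (Or.inr rfl)
      rw [← heq] at q5
      have g5 := triple_mem (by omega) (by omega) (by omega) (by omega) q5
      omega
    · rw [hex, drE hk (by omega : (0:ℕ) = 0 * 0), hey, drE hk (by omega : (0:ℕ) = 0 * 0)] at heq
      have q1 : ((0 : ℕ) : ZMod (6*k+3)) ∈ ({((0 : ℕ) : ZMod (6*k+3)), ((6*k : ℕ) : ZMod (6*k+3)), ((6*k+1 : ℕ) : ZMod (6*k+3))} : Set (ZMod (6*k+3))) := Set.mem_insert _ _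
      rw [heq] at q1
      have g1 := triple_mem (by omega) (by omega) (by omega) (by omega) q1
      have q2 : ((6*k : ℕ) : ZMod (6*k+3)) ∈ ({((0 : ℕ) : ZMod (6*k+3)), ((6*k : ℕ) : ZMod (6*k+3)), ((6*k+1 : ℕ) : ZMod (6*k+3))} : Set (ZMod (6*k+3))) := Set.mem_insert_iff.2 (Or.inr (Set.mem_insert _ _))
      rw [heq] at q2
      have g2 := triple_mem (by omega) (by omega) (by omega) (by omega) q2
      have q3 : ((6*k+1 : ℕ) : ZMod (6*k+3)) ∈ ({((0 : ℕ) : ZMod (6*k+3)), ((6*k : ℕ) : ZMod (6*k+3)), ((6*k+1 : ℕ) : ZMod (6*k+3))} : Set (ZMod (6*k+3))) := Set.mem_insert_iff.2 (Or.inr (Set.mem_insert_iff.2 (Or.inr rfl)))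
      rw [heq] at q3
      have g3 := triple_mem (by omega) (by omega) (by omega) (by omega) q3
      have q4 : ((0 : ℕ) : ZMod (6*k+3)) ∈ ({((0 : ℕ) : ZMod (6*k+3)), ((6*k : ℕ) : ZMod (6*k+3)), ((6*k+1 : ℕ) : ZMod (6*k+3))} : Set (ZMod (6*k+3))) := Set.mem_insert _ _
      rw [← heq] at q4
      have g4 := triple_mem (by omega) (by omega) (by omega) (by omega) q4
      have q5 : ((6*k : ℕ) : ZMod (6*k+3)) ∈ ({((0 : ℕ) : ZMod (6*k+3)), ((6*k : ℕ) : ZMod (6*k+3)), ((6*k+1 : ℕ) : ZMod (6*k+3))} : Set (ZMod (6*k+3))) := Set.mem_insert_iff.2 (Or.inr (Set.mem_insert _ _))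
      rw [← heq] at q5
      have g5 := triple_mem (by omega) (by omega) (by omega) (by omega) q5
      have q6 : ((6*k+1 : ℕ) : ZMod (6*k+3)) ∈ ({((0 : ℕ) : ZMod (6*k+3)), ((6*k : ℕ) : ZMod (6*k+3)), ((6*k+1 : ℕ) : ZMod (6*k+3))} : Set (ZMod (6*k+3))) := Set.mem_insert_iff.2 (Or.inr (Set.mem_insert_iff.2 (Or.inr rfl)))
      rw [← heq] at q6
      have g6 := triple_mem (by omega) (by omega) (by omega) (by omega) q6
      exact hne (by rw [← hxv, ← hyv, hex, hey]; all_goals exact (cinj (by omega) (by omega)).2 (by omega))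


theorem stmt18 (k : ℕ) (hk : 1 ≤ k) :
    IsLeast {m | ∃ D : Set (ZMod (6*k+3)),
        IsLD (cycleG (6*k+3)) 2 D ∧ D.ncard = m} ((6*k+3+2)/3 + 1) ∧
    (6*k+3+2)/3 + 1 = 2*k+2 ∧
    IsLeast {m | ∃ D : Set (ZMod 6),
        IsLD (cycleG 6) 2 D ∧ D.ncard = m} 3 := by
  refine ⟨⟨⟨Dk k, isLD_Dk hk, by rw [ncard_Dk hk]; omega⟩, ?_⟩, by omega, c6_least⟩
  rintro m ⟨D, hLD, rfl⟩
  have := lower_bound k hk hLD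
  omega
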